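/- arXiv:1707.01114 — 13 statements merged into one kernel-verified Lean document; each statement's English description precedes it below -/
import Mathlib

section
/- Let X be a finite set, let P and Q be probability mass functions on X with Q(x) > 0 for all x, and let T : X → [0,1] be an arbitrary (randomized) binary test. Set p = ∑_x T(x) P(x) and q = ∑_x T(x) Q(x), and assume 0 < q < 1. Then for every α ∈ (0,1) ∪ (1,∞), the Rényi divergence satisfies the binary data-processing inequality D_α(P,Q) ≥ d_α(p,q). -/
open Finset Real

private lemma renyi_sum_split {X : Type*} [Fintype X] (P Q : X → ℝ)
    (hP0 : ∀ x, 0 ≤ P x) (hQ0 : ∀ x, 0 < Q x)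
    (w : X → ℝ) (hw0 : ∀ x, 0 ≤ w x) (α : ℝ)
    (hs : 0 < ∑ x, w x * Q x) :
    ((∑ x, (w x * Q x / (∑ y, w y * Q y)) * (P x / Q x)) ^ α) * (∑ x, w x * Q x)
      = (∑ x, w x * P x) ^ α * (∑ x, w x * Q x) ^ (1 - α) := by
  set s := ∑ x, w x * Q x with hsdef
  have h1 : ∑ x, (w x * Q x / s) * (P x / Q x) = (∑ x, w x * P x) / s := by
    rw [Finset.sum_div]
    refine Finset.sum_congr rfl fun x _ => ?_
    field_simp [(hQ0 x).ne']
  rw [h1, Real.div_rpow (Finset.sum_nonneg fun x _ => mul_nonneg (hw0 x) (hP0 x)) hs.le,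
    Real.rpow_sub hs, Real.rpow_one]
  ring

private lemma renyi_term_eq {X : Type*} [Fintype X] (P Q : X → ℝ)
    (hP0 : ∀ x, 0 ≤ P x) (hQ0 : ∀ x, 0 < Q x)
    (w : X → ℝ) (α : ℝ) (s : ℝ) (hs : 0 < s) (x : X) :
    (w x * Q x / s) * ((P x / Q x) ^ α) = (w x * (P x ^ α * Q x ^ (1 - α))) / s := by
  rw [Real.div_rpow (hP0 x) (hQ0 x).le, Real.rpow_sub (hQ0 x), Real.rpow_one]
  have h1 : (Q x : ℝ) ^ α ≠ 0 := (Real.rpow_pos_of_pos (hQ0 x) α).ne'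
  field_simp

private lemma jensen_rpow_convex {X : Type*} [Fintype X] (P Q : X → ℝ)
    (hP0 : ∀ x, 0 ≤ P x) (hQ0 : ∀ x, 0 < Q x)
    (w : X → ℝ) (hw0 : ∀ x, 0 ≤ w x) (α : ℝ) (hα : 1 ≤ α)
    (hs : 0 < ∑ x, w x * Q x) :
    (∑ x, w x * P x) ^ α * (∑ x, w x * Q x) ^ (1 - α)
      ≤ ∑ x, w x * (P x ^ α * Q x ^ (1 - α)) := by
  set s := ∑ x, w x * Q x with hsdef
  have hsum1 : ∑ x, w x * Q x / s = 1 := by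
    rw [← Finset.sum_div, ← hsdef, div_self hs.ne']
  have hkey := (convexOn_rpow hα).map_sum_le (t := Finset.univ)
    (w := fun x => w x * Q x / s) (p := fun x => P x / Q x)
    (fun x _ => div_nonneg (mul_nonneg (hw0 x) (hQ0 x).le) hs.le)
    (by simpa using hsum1)
    (fun x _ => Set.mem_Ici.2 (div_nonneg (hP0 x) (hQ0 x).le))
  simp only [smul_eq_mul] at hkey
  have h2 : ∑ x, (w x * Q x / s) * ((P x / Q x) ^ α)
      = (∑ x, w x * (P x ^ α * Q x ^ (1 - α))) / s := by
    rw [Finset.sum_div]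
    exact Finset.sum_congr rfl fun x _ => renyi_term_eq P Q hP0 hQ0 w α s hs x
  rw [h2] at hkey
  have := mul_le_mul_of_nonneg_right hkey hs.le
  rw [div_mul_cancel₀ _ hs.ne'] at this
  calc (∑ x, w x * P x) ^ α * s ^ (1 - α)
      = ((∑ x, (w x * Q x / s) * (P x / Q x)) ^ α) * s :=
        (renyi_sum_split P Q hP0 hQ0 w hw0 α hs).symm
    _ ≤ ∑ x, w x * (P x ^ α * Q x ^ (1 - α)) := this

private lemma jensen_rpow_concave {X : Type*} [Fintype X] (P Q : X → ℝ)
    (hP0 : ∀ x, 0 ≤ P x) (hQ0 : ∀ x, 0 < Q x)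
    (w : X → ℝ) (hw0 : ∀ x, 0 ≤ w x) (α : ℝ) (hα0 : 0 ≤ α) (hα1 : α ≤ 1)
    (hs : 0 < ∑ x, w x * Q x) :
    ∑ x, w x * (P x ^ α * Q x ^ (1 - α))
      ≤ (∑ x, w x * P x) ^ α * (∑ x, w x * Q x) ^ (1 - α) := by
  set s := ∑ x, w x * Q x with hsdef
  have hsum1 : ∑ x, w x * Q x / s = 1 := by
    rw [← Finset.sum_div, ← hsdef, div_self hs.ne']
  have hkey := (Real.concaveOn_rpow hα0 hα1).le_map_sum (t := Finset.univ)
    (w := fun x => w x * Q x / s) (p := fun x => P x / Q x)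
    (fun x _ => div_nonneg (mul_nonneg (hw0 x) (hQ0 x).le) hs.le)
    (by simpa using hsum1)
    (fun x _ => Set.mem_Ici.2 (div_nonneg (hP0 x) (hQ0 x).le))
  simp only [smul_eq_mul] at hkey
  have h2 : ∑ x, (w x * Q x / s) * ((P x / Q x) ^ α)
      = (∑ x, w x * (P x ^ α * Q x ^ (1 - α))) / s := by
    rw [Finset.sum_div]
    exact Finset.sum_congr rfl fun x _ => renyi_term_eq P Q hP0 hQ0 w α s hs x
  rw [h2] at hkey
  have := mul_le_mul_of_nonneg_right hkey hs.le
  rw [div_mul_cancel₀ _ hs.ne'] at this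
  calc ∑ x, w x * (P x ^ α * Q x ^ (1 - α))
      ≤ ((∑ x, (w x * Q x / s) * (P x / Q x)) ^ α) * s := this
    _ = (∑ x, w x * P x) ^ α * s ^ (1 - α) :=
        renyi_sum_split P Q hP0 hQ0 w hw0 α hs

/-- **Binary data-processing inequality for the Rényi divergence.**
For probability mass functions `P`, `Q` on a finite set `X` with `Q > 0` everywhere,
any randomized binary test `T : X → [0,1]` with acceptance probabilities
`p = ∑ x, T x * P x` and `q = ∑ x, T x * Q x` (with `0 < q < 1`), and any order
`α ∈ (0,1) ∪ (1,∞)`, we have `D_α(P,Q) ≥ d_α(p,q)`. -/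
theorem renyi_binary_data_processing {X : Type*} [Fintype X]
    (P Q : X → ℝ)
    (hP0 : ∀ x, 0 ≤ P x) (hP1 : ∑ x, P x = 1)
    (hQ0 : ∀ x, 0 < Q x) (hQ1 : ∑ x, Q x = 1)
    (T : X → ℝ) (hT : ∀ x, T x ∈ Set.Icc (0 : ℝ) 1)
    (p q : ℝ) (hp : p = ∑ x, T x * P x) (hq : q = ∑ x, T x * Q x)
    (hq0 : 0 < q) (hq1 : q < 1)
    (α : ℝ) (hα : α ∈ Set.Ioo (0 : ℝ) 1 ∪ Set.Ioi (1 : ℝ)) :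
    (1 / (α - 1)) * Real.log (∑ x, P x ^ α * Q x ^ (1 - α)) ≥
      (1 / (α - 1)) * Real.log
        (p ^ α * q ^ (1 - α) + (1 - p) ^ α * (1 - q) ^ (1 - α)) := by
  have hT0 : ∀ x, 0 ≤ T x := fun x => (hT x).1
  have hT1 : ∀ x, T x ≤ 1 := fun x => (hT x).2
  have hT0' : ∀ x, 0 ≤ 1 - T x := fun x => by linarith [hT1 x]
  have hp0 : 0 ≤ p := hp ▸ Finset.sum_nonneg fun x _ => mul_nonneg (hT0 x) (hP0 x)
  have hp1 : p ≤ 1 := by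
    rw [hp, ← hP1]
    exact Finset.sum_le_sum fun x _ => by nlinarith [hP0 x, hT0 x, hT1 x]
  have hsT : 0 < ∑ x, T x * Q x := hq ▸ hq0
  have hsT' : 0 < ∑ x, (1 - T x) * Q x := by
    have : ∑ x, (1 - T x) * Q x = 1 - q := by
      simp only [sub_mul, one_mul, Finset.sum_sub_distrib, hQ1, hq]
    rw [this]; linarith
  have hpT : ∑ x, T x * P x = p := hp.symm
  have hpT' : ∑ x, (1 - T x) * P x = 1 - p := by
    simp only [sub_mul, one_mul, Finset.sum_sub_distrib, hP1, hp]
  have hqT : ∑ x, T x * Q x = q := hq.symm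
  have hqT' : ∑ x, (1 - T x) * Q x = 1 - q := by
    simp only [sub_mul, one_mul, Finset.sum_sub_distrib, hQ1, hq]
  have hsplit : (∑ x, P x ^ α * Q x ^ (1 - α))
      = (∑ x, T x * (P x ^ α * Q x ^ (1 - α)))
        + ∑ x, (1 - T x) * (P x ^ α * Q x ^ (1 - α)) := by
    rw [← Finset.sum_add_distrib]
    exact Finset.sum_congr rfl fun x _ => by ring
  -- positivity of the LHS sum
  have hSpos : 0 < ∑ x, P x ^ α * Q x ^ (1 - α) := by
    obtain ⟨x, hx⟩ : ∃ x, 0 < P x := by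
      by_contra h
      push_neg at h
      have : ∑ x, P x = 0 :=
        Finset.sum_eq_zero fun x _ => le_antisymm (h x) (hP0 x)
      rw [this] at hP1; norm_num at hP1
    refine Finset.sum_pos' (fun y _ => mul_nonneg (Real.rpow_nonneg (hP0 y) α)
      (Real.rpow_pos_of_pos (hQ0 y) (1 - α)).le) ⟨x, Finset.mem_univ x, ?_⟩
    exact mul_pos (Real.rpow_pos_of_pos hx α) (Real.rpow_pos_of_pos (hQ0 x) (1 - α))
  -- positivity of the binary quantity
  have hBpos : 0 < p ^ α * q ^ (1 - α) + (1 - p) ^ α * (1 - q) ^ (1 - α) := by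
    rcases hp0.eq_or_lt with h | h
    · have h2 : (0:ℝ) < (1 - p) ^ α * (1 - q) ^ (1 - α) :=
        mul_pos (Real.rpow_pos_of_pos (by linarith) α)
          (Real.rpow_pos_of_pos (by linarith) (1 - α))
      have h1 : 0 ≤ p ^ α * q ^ (1 - α) :=
        mul_nonneg (Real.rpow_nonneg hp0 α) (Real.rpow_pos_of_pos hq0 (1 - α)).le
      linarith
    · have h1 : (0:ℝ) < p ^ α * q ^ (1 - α) :=
        mul_pos (Real.rpow_pos_of_pos h α) (Real.rpow_pos_of_pos hq0 (1 - α))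
      have h2 : 0 ≤ (1 - p) ^ α * (1 - q) ^ (1 - α) :=
        mul_nonneg (Real.rpow_nonneg (by linarith) α)
          (Real.rpow_pos_of_pos (by linarith) (1 - α)).le
      linarith
  rcases hα with ⟨hα0, hα1⟩ | hα1
  · -- 0 < α < 1 : concave case, 1/(α-1) < 0
    have hc : (1 : ℝ) / (α - 1) ≤ 0 := by
      apply div_nonpos_of_nonneg_of_nonpos <;> linarith
    have h1 := jensen_rpow_concave P Q hP0 hQ0 T hT0 α hα0.le hα1.le hsT
    have h2 := jensen_rpow_concave P Q hP0 hQ0 (fun x => 1 - T x) hT0' α hα0.le hα1.le hsT'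
    rw [hpT, hqT] at h1
    rw [hpT', hqT'] at h2
    have hBS : (∑ x, P x ^ α * Q x ^ (1 - α))
        ≤ p ^ α * q ^ (1 - α) + (1 - p) ^ α * (1 - q) ^ (1 - α) := by
      rw [hsplit]; exact add_le_add h1 h2
    have hlog : Real.log (∑ x, P x ^ α * Q x ^ (1 - α))
        ≤ Real.log (p ^ α * q ^ (1 - α) + (1 - p) ^ α * (1 - q) ^ (1 - α)) :=
      Real.log_le_log hSpos hBS
    exact mul_le_mul_of_nonpos_left hlog hc
  · -- α > 1 : convex case, 1/(α-1) > 0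
    rw [Set.mem_Ioi] at hα1
    have hc : (0:ℝ) ≤ 1 / (α - 1) := by
      have h : (0:ℝ) < α - 1 := by linarith
      positivity
    have h1 := jensen_rpow_convex P Q hP0 hQ0 T hT0 α hα1.le hsT
    have h2 := jensen_rpow_convex P Q hP0 hQ0 (fun x => 1 - T x) hT0' α hα1.le hsT'
    rw [hpT, hqT] at h1
    rw [hpT', hqT'] at h2
    have hBS : p ^ α * q ^ (1 - α) + (1 - p) ^ α * (1 - q) ^ (1 - α)
        ≤ ∑ x, P x ^ α * Q x ^ (1 - α) := by
      rw [hsplit]; exact add_le_add h1 h2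
    have hlog : Real.log (p ^ α * q ^ (1 - α) + (1 - p) ^ α * (1 - q) ^ (1 - α))
        ≤ Real.log (∑ x, P x ^ α * Q x ^ (1 - α)) :=
      Real.log_le_log hBpos hBS
    exact mul_le_mul_of_nonneg_left hlog hc
end

section
/- Let X and Y be finite sets with |X| = m ≥ 2, let P be a probability mass function on X × Y, let σ be a probability mass function on Y with σ(y) > 0 for all y, and let Λ be a randomized guessing strategy, i.e., for each y ∈ Y, Λ(·|y) is a probability mass function on X. Let P_Λ = ∑_{x,y} P(x,y) Λ(x|y) be the probability of correctly guessing x from y under Λ, and assume 0 < P_Λ < 1. Then for every α ∈ (0,1) ∪ (1,∞), D_α(P, π_X ⊗ σ) ≥ d_α(P_Λ, 1/m), where π_X ⊗ σ denotes the product distribution (x,y) ↦ σ(y)/m. -/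
open Finset Real

/-- Superadditivity-type bound for `α ∈ (0,1)`:
`∑ aᵢ^α bᵢ^(1-α) ≤ (∑ aᵢ)^α (∑ bᵢ)^(1-α)`. -/
lemma aux_geom_sum_le {ι : Type*} [Fintype ι] (a b : ι → ℝ) (α : ℝ)
    (hα0 : 0 < α) (hα1 : α < 1)
    (ha : ∀ i, 0 ≤ a i) (hb : ∀ i, 0 ≤ b i) :
    ∑ i, a i ^ α * b i ^ (1 - α) ≤ (∑ i, a i) ^ α * (∑ i, b i) ^ (1 - α) := by
  set A := ∑ i, a i with hA
  set B := ∑ i, b i with hB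
  have hA0 : 0 ≤ A := Finset.sum_nonneg fun i _ => ha i
  have hB0 : 0 ≤ B := Finset.sum_nonneg fun i _ => hb i
  rcases hA0.eq_or_lt with hA0' | hA0'
  · have hz : ∀ i, a i = 0 := by
      intro i
      have := (Finset.sum_eq_zero_iff_of_nonneg (fun i _ => ha i)).mp hA0'.symm
      exact this i (Finset.mem_univ i)
    have : ∑ i, a i ^ α * b i ^ (1 - α) = 0 := by
      apply Finset.sum_eq_zero; intro i _
      rw [hz i, Real.zero_rpow hα0.ne', zero_mul]
    rw [this]
    positivity
  rcases hB0.eq_or_lt with hB0' | hB0'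
  · have hz : ∀ i, b i = 0 := by
      intro i
      have := (Finset.sum_eq_zero_iff_of_nonneg (fun i _ => hb i)).mp hB0'.symm
      exact this i (Finset.mem_univ i)
    have : ∑ i, a i ^ α * b i ^ (1 - α) = 0 := by
      apply Finset.sum_eq_zero; intro i _
      rw [hz i, Real.zero_rpow (by linarith), mul_zero]
    rw [this]
    positivity
  -- main case: A, B > 0
  have key : ∀ i, a i ^ α * b i ^ (1 - α)
      ≤ (α * (a i / A) + (1 - α) * (b i / B)) * (A ^ α * B ^ (1 - α)) := by
    intro i
    have h := Real.geom_mean_le_arith_mean2_weighted hα0.le (by linarith : (0:ℝ) ≤ 1 - α)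
      (div_nonneg (ha i) hA0) (div_nonneg (hb i) hB0) (by ring)
    have hmul := mul_le_mul_of_nonneg_right h
      (by positivity : (0:ℝ) ≤ A ^ α * B ^ (1 - α))
    calc a i ^ α * b i ^ (1 - α)
        = ((a i / A) ^ α * (b i / B) ^ (1 - α)) * (A ^ α * B ^ (1 - α)) := by
          rw [Real.div_rpow (ha i) hA0, Real.div_rpow (hb i) hB0]
          field_simp
      _ ≤ _ := hmul
  calc ∑ i, a i ^ α * b i ^ (1 - α)
      ≤ ∑ i, (α * (a i / A) + (1 - α) * (b i / B)) * (A ^ α * B ^ (1 - α)) :=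
        Finset.sum_le_sum fun i _ => key i
    _ = (α * (A / A) + (1 - α) * (B / B)) * (A ^ α * B ^ (1 - α)) := by
        rw [← Finset.sum_mul]
        congr 1
        rw [Finset.sum_add_distrib, ← Finset.mul_sum, ← Finset.mul_sum,
          ← Finset.sum_div, ← Finset.sum_div]
    _ = A ^ α * B ^ (1 - α) := by
        rw [div_self hA0'.ne', div_self hB0'.ne']
        ring

/-- Subadditivity-type bound for `α > 1`:
`∑ aᵢ^α bᵢ^(1-α) ≥ (∑ aᵢ)^α (∑ bᵢ)^(1-α)` (need `bᵢ = 0 → aᵢ = 0`). -/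
lemma aux_geom_sum_ge {ι : Type*} [Fintype ι] (a b : ι → ℝ) (α : ℝ)
    (hα1 : 1 < α)
    (ha : ∀ i, 0 ≤ a i) (hb : ∀ i, 0 ≤ b i) (hab : ∀ i, b i = 0 → a i = 0) :
    (∑ i, a i) ^ α * (∑ i, b i) ^ (1 - α) ≤ ∑ i, a i ^ α * b i ^ (1 - α) := by
  have hα0 : (0:ℝ) < α := by linarith
  set A := ∑ i, a i with hA
  set B := ∑ i, b i with hB
  have hA0 : 0 ≤ A := Finset.sum_nonneg fun i _ => ha i
  have hB0 : 0 ≤ B := Finset.sum_nonneg fun i _ => hb i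
  rcases hB0.eq_or_lt with hB0' | hB0'
  · have hzb : ∀ i, b i = 0 := by
      intro i
      have := (Finset.sum_eq_zero_iff_of_nonneg (fun i _ => hb i)).mp hB0'.symm
      exact this i (Finset.mem_univ i)
    have hzA : A = 0 := Finset.sum_eq_zero fun i _ => hab i (hzb i)
    rw [hzA, Real.zero_rpow hα0.ne', zero_mul]
    apply Finset.sum_nonneg
    intro i _
    exact mul_nonneg (Real.rpow_nonneg (ha i) _) (Real.rpow_nonneg (hb i) _)
  rcases hA0.eq_or_lt with hA0' | hA0'
  · rw [← hA0', Real.zero_rpow hα0.ne', zero_mul]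
    apply Finset.sum_nonneg
    intro i _
    exact mul_nonneg (Real.rpow_nonneg (ha i) _) (Real.rpow_nonneg (hb i) _)
  -- main case: A, B > 0
  have key : ∀ i, (α * (a i / A) + (1 - α) * (b i / B)) * (A ^ α * B ^ (1 - α))
      ≤ a i ^ α * b i ^ (1 - α) := by
    intro i
    rcases (hb i).eq_or_lt with hbi | hbi
    · rw [hab i hbi.symm, ← hbi]
      rw [Real.zero_rpow hα0.ne', zero_mul]
      have : α * (0 / A) + (1 - α) * (0 / B) = 0 := by simp
      rw [this, zero_mul]
    · -- b i > 0 : Bernoulli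
      have hbp : 0 < b i / B := div_pos hbi hB0'
      have ht0 : (0:ℝ) ≤ (a i / A) / (b i / B) :=
        div_nonneg (div_nonneg (ha i) hA0) hbp.le
      have hbern := one_add_mul_self_le_rpow_one_add
        (s := (a i / A) / (b i / B) - 1) (by linarith) hα1.le
      rw [add_sub_cancel] at hbern
      -- hbern : 1 + α * (t - 1) ≤ t ^ α  with t = (a/A)/(b/B)
      have hmul := mul_le_mul_of_nonneg_right hbern hbp.le
      have hrw : ((a i / A) / (b i / B)) ^ α * (b i / B)
          = (a i / A) ^ α * (b i / B) ^ (1 - α) := by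
        rw [Real.div_rpow (div_nonneg (ha i) hA0) hbp.le, Real.rpow_sub hbp,
          Real.rpow_one]
        field_simp
      rw [hrw] at hmul
      have h2 : α * (a i / A) + (1 - α) * (b i / B)
          ≤ (a i / A) ^ α * (b i / B) ^ (1 - α) := by
        have : (1 + α * ((a i / A) / (b i / B) - 1)) * (b i / B)
            = α * (a i / A) + (1 - α) * (b i / B) := by
          field_simp
          ring
        linarith [this ▸ hmul]
      have hmul2 := mul_le_mul_of_nonneg_right h2
        (by positivity : (0:ℝ) ≤ A ^ α * B ^ (1 - α))
      calc (α * (a i / A) + (1 - α) * (b i / B)) * (A ^ α * B ^ (1 - α))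
          ≤ ((a i / A) ^ α * (b i / B) ^ (1 - α)) * (A ^ α * B ^ (1 - α)) := hmul2
        _ = a i ^ α * b i ^ (1 - α) := by
            rw [Real.div_rpow (ha i) hA0, Real.div_rpow (hb i) hB0]
            field_simp
  calc A ^ α * B ^ (1 - α)
      = (α * (A / A) + (1 - α) * (B / B)) * (A ^ α * B ^ (1 - α)) := by
        rw [div_self hA0'.ne', div_self hB0'.ne']
        ring
    _ = ∑ i, (α * (a i / A) + (1 - α) * (b i / B)) * (A ^ α * B ^ (1 - α)) := by
        rw [← Finset.sum_mul]
        congr 1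
        rw [Finset.sum_add_distrib, ← Finset.mul_sum, ← Finset.mul_sum,
          ← Finset.sum_div, ← Finset.sum_div]
    _ ≤ ∑ i, a i ^ α * b i ^ (1 - α) := Finset.sum_le_sum fun i _ => key i

lemma aux_split (p q t α : ℝ) (hp : 0 ≤ p) (hq : 0 ≤ q) (ht : 0 ≤ t) (hα : α ≠ 0) :
    (p * t) ^ α * (q * t) ^ (1 - α) = p ^ α * q ^ (1 - α) * t := by
  rcases ht.eq_or_lt with h | h
  · rw [← h, mul_zero, mul_zero, Real.zero_rpow hα, zero_mul, mul_zero]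
  · rw [Real.mul_rpow hp h.le, Real.mul_rpow hq h.le]
    have htt : t ^ α * t ^ (1 - α) = t := by
      rw [← Real.rpow_add h]
      norm_num
    calc p ^ α * t ^ α * (q ^ (1 - α) * t ^ (1 - α))
        = p ^ α * q ^ (1 - α) * (t ^ α * t ^ (1 - α)) := by ring
      _ = p ^ α * q ^ (1 - α) * t := by rw [htt]

/-- **Data-processing bound for guessing strategies.**
For a joint pmf `P` on `X × Y` with `|X| = m ≥ 2`, a strictly positive pmf `σ` on `Y`,
and a randomized guessing strategy `Λ` (a pmf on `X` for each `y`), with correct-guessing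
probability `PΛ = ∑ (x,y), P (x,y) * Λ y x` satisfying `0 < PΛ < 1`, for every
`α ∈ (0,1) ∪ (1,∞)` we have `D_α(P, π_X ⊗ σ) ≥ d_α(PΛ, 1/m)`. -/
theorem renyi_guessing_bound {X Y : Type*} [Fintype X] [Fintype Y] (m : ℕ)
    (hm : Fintype.card X = m) (hm2 : 2 ≤ m)
    (P : X × Y → ℝ) (hP0 : ∀ z, 0 ≤ P z) (hP1 : ∑ z, P z = 1)
    (σ : Y → ℝ) (hσ0 : ∀ y, 0 < σ y) (hσ1 : ∑ y, σ y = 1)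
    (Λ : Y → X → ℝ) (hΛ0 : ∀ y x, 0 ≤ Λ y x) (hΛ1 : ∀ y, ∑ x, Λ y x = 1)
    (PΛ : ℝ) (hPΛ : PΛ = ∑ z : X × Y, P z * Λ z.2 z.1)
    (h0 : 0 < PΛ) (h1 : PΛ < 1)
    (α : ℝ) (hα : α ∈ Set.Ioo (0 : ℝ) 1 ∪ Set.Ioi (1 : ℝ)) :
    (1 / (α - 1)) * Real.log (∑ z : X × Y, P z ^ α * (σ z.2 / m) ^ (1 - α)) ≥
      (1 / (α - 1)) * Real.log
        (PΛ ^ α * (1 / (m : ℝ)) ^ (1 - α) +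
          (1 - PΛ) ^ α * (1 - 1 / (m : ℝ)) ^ (1 - α)) := by
  have hα0 : 0 < α := by
    rcases hα with h | h
    · exact h.1
    · exact lt_trans one_pos h
  have hmR : (0 : ℝ) < (m : ℝ) := by
    have : 0 < m := by omega
    exact_mod_cast this
  set w : X × Y → ℝ := fun z => Λ z.2 z.1 with hwdef
  have hQ0 : ∀ z : X × Y, 0 < σ z.2 / (m : ℝ) := fun z => div_pos (hσ0 z.2) hmR
  have hw0 : ∀ z, 0 ≤ w z := fun z => hΛ0 z.2 z.1
  have hw1 : ∀ z, w z ≤ 1 := by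
    intro z
    calc w z ≤ ∑ x, Λ z.2 x :=
          Finset.single_le_sum (fun x _ => hΛ0 z.2 x) (Finset.mem_univ z.1)
      _ = 1 := hΛ1 z.2
  have hQsum : ∑ z : X × Y, σ z.2 / (m : ℝ) = 1 := by
    rw [Fintype.sum_prod_type_right]
    have h1' : ∀ y, ∑ _x : X, σ y / (m : ℝ) = σ y := by
      intro y
      rw [Finset.sum_const, Finset.card_univ, hm, nsmul_eq_mul]
      field_simp
    rw [Finset.sum_congr rfl fun y _ => h1' y, hσ1]
  have hPw : ∑ z : X × Y, P z * w z = PΛ := hPΛ.symm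
  have hQw : ∑ z : X × Y, (σ z.2 / (m : ℝ)) * w z = 1 / (m : ℝ) := by
    rw [Fintype.sum_prod_type_right]
    have h1' : ∀ y, ∑ x : X, (σ y / (m : ℝ)) * Λ y x = σ y / (m : ℝ) := by
      intro y
      rw [← Finset.mul_sum, hΛ1 y, mul_one]
    rw [Finset.sum_congr rfl fun y _ => h1' y]
    rw [← Finset.sum_div, hσ1]
  have hPw' : ∑ z : X × Y, P z * (1 - w z) = 1 - PΛ := by
    have : ∀ z : X × Y, P z * (1 - w z) = P z - P z * w z := fun z => by ring
    rw [Finset.sum_congr rfl fun z _ => this z, Finset.sum_sub_distrib, hP1, hPw]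
  have hQw' : ∑ z : X × Y, (σ z.2 / (m : ℝ)) * (1 - w z) = 1 - 1 / (m : ℝ) := by
    have : ∀ z : X × Y, (σ z.2 / (m : ℝ)) * (1 - w z)
        = σ z.2 / (m : ℝ) - (σ z.2 / (m : ℝ)) * w z := fun z => by ring
    rw [Finset.sum_congr rfl fun z _ => this z, Finset.sum_sub_distrib, hQsum, hQw]
  have hsplit : ∑ z : X × Y, P z ^ α * (σ z.2 / (m : ℝ)) ^ (1 - α)
      = (∑ z : X × Y, (P z * w z) ^ α * ((σ z.2 / (m : ℝ)) * w z) ^ (1 - α))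
        + ∑ z : X × Y, (P z * (1 - w z)) ^ α * ((σ z.2 / (m : ℝ)) * (1 - w z)) ^ (1 - α) := by
    rw [← Finset.sum_add_distrib]
    apply Finset.sum_congr rfl
    intro z _
    rw [aux_split _ _ _ _ (hP0 z) (hQ0 z).le (hw0 z) hα0.ne',
      aux_split _ _ _ _ (hP0 z) (hQ0 z).le (by linarith [hw1 z]) hα0.ne']
    ring
  rcases hα with hαlt | hαgt
  · -- α ∈ (0,1)
    have hS0 : 0 < ∑ z : X × Y, P z ^ α * (σ z.2 / (m : ℝ)) ^ (1 - α) := by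
      have hex : ∃ z : X × Y, 0 < P z := by
        by_contra hc
        push_neg at hc
        have : ∑ z : X × Y, P z = 0 :=
          Finset.sum_eq_zero fun z _ => le_antisymm (hc z) (hP0 z)
        rw [hP1] at this
        norm_num at this
      obtain ⟨z₀, hz₀⟩ := hex
      apply Finset.sum_pos'
      · intro z _
        exact mul_nonneg (Real.rpow_nonneg (hP0 z) _) (Real.rpow_nonneg (hQ0 z).le _)
      · exact ⟨z₀, Finset.mem_univ z₀,
          mul_pos (Real.rpow_pos_of_pos hz₀ _) (Real.rpow_pos_of_pos (hQ0 z₀) _)⟩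
    have hmain : ∑ z : X × Y, P z ^ α * (σ z.2 / (m : ℝ)) ^ (1 - α)
        ≤ PΛ ^ α * (1 / (m : ℝ)) ^ (1 - α) + (1 - PΛ) ^ α * (1 - 1 / (m : ℝ)) ^ (1 - α) := by
      rw [hsplit, ← hPw', ← hQw', ← hPw, ← hQw]
      have hA := aux_geom_sum_le (fun z : X × Y => P z * w z)
        (fun z : X × Y => (σ z.2 / (m : ℝ)) * w z) α hαlt.1 hαlt.2
        (fun z => mul_nonneg (hP0 z) (hw0 z)) (fun z => mul_nonneg (hQ0 z).le (hw0 z))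
      have hB := aux_geom_sum_le (fun z : X × Y => P z * (1 - w z))
        (fun z : X × Y => (σ z.2 / (m : ℝ)) * (1 - w z)) α hαlt.1 hαlt.2
        (fun z => mul_nonneg (hP0 z) (by linarith [hw1 z]))
        (fun z => mul_nonneg (hQ0 z).le (by linarith [hw1 z]))
      exact add_le_add hA hB
    have hlog := Real.log_le_log hS0 hmain
    have hc : 1 / (α - 1) ≤ 0 := le_of_lt (by
      apply div_neg_of_pos_of_neg one_pos
      linarith [hαlt.2])
    exact mul_le_mul_of_nonpos_left hlog hc
  · -- α > 1
    have hR0 : 0 < PΛ ^ α * (1 / (m : ℝ)) ^ (1 - α)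
        + (1 - PΛ) ^ α * (1 - 1 / (m : ℝ)) ^ (1 - α) := by
      have ht1 : 0 < PΛ ^ α * (1 / (m : ℝ)) ^ (1 - α) :=
        mul_pos (Real.rpow_pos_of_pos h0 _)
          (Real.rpow_pos_of_pos (by positivity) _)
      have ht2 : 0 ≤ (1 - PΛ) ^ α * (1 - 1 / (m : ℝ)) ^ (1 - α) :=
        mul_nonneg (Real.rpow_nonneg (by linarith) _) (Real.rpow_nonneg (by
          have : 1 / (m : ℝ) ≤ 1 / 2 := by
            apply one_div_le_one_div_of_le
            · norm_num
            · exact_mod_cast hm2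
          linarith) _)
      linarith
    have hmain : PΛ ^ α * (1 / (m : ℝ)) ^ (1 - α) + (1 - PΛ) ^ α * (1 - 1 / (m : ℝ)) ^ (1 - α)
        ≤ ∑ z : X × Y, P z ^ α * (σ z.2 / (m : ℝ)) ^ (1 - α) := by
      rw [hsplit, ← hPw', ← hQw', ← hPw, ← hQw]
      have hA := aux_geom_sum_ge (fun z : X × Y => P z * w z)
        (fun z : X × Y => (σ z.2 / (m : ℝ)) * w z) α hαgt
        (fun z => mul_nonneg (hP0 z) (hw0 z)) (fun z => mul_nonneg (hQ0 z).le (hw0 z))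
        (fun z hz => by
          rcases mul_eq_zero.mp hz with h | h
          · exact absurd h (hQ0 z).ne'
          · show P z * w z = 0
            rw [h, mul_zero])
      have hB := aux_geom_sum_ge (fun z : X × Y => P z * (1 - w z))
        (fun z : X × Y => (σ z.2 / (m : ℝ)) * (1 - w z)) α hαgt
        (fun z => mul_nonneg (hP0 z) (by linarith [hw1 z]))
        (fun z => mul_nonneg (hQ0 z).le (by linarith [hw1 z]))
        (fun z hz => by
          rcases mul_eq_zero.mp hz with h | h
          · exact absurd h (hQ0 z).ne'
          · show P z * (1 - w z) = 0
            rw [h, mul_zero])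
      exact add_le_add hA hB
    have hlog := Real.log_le_log hR0 hmain
    have hc : 0 ≤ 1 / (α - 1) := le_of_lt (by
      apply div_pos one_pos
      linarith [Set.mem_Ioi.mp hαgt])
    exact mul_le_mul_of_nonneg_left hlog hc
end

section
/- Let X and Y be finite sets with |X| = m ≥ 2 and let P be a probability mass function on X × Y. Let P_opt(X|Y) = ∑_y max_x P(x,y) denote the optimal guessing probability of x from y. Then the conditional Shannon entropy satisfies Fano's inequality: H(X|Y) ≤ (1 − P_opt(X|Y)) · log(m − 1) + h₂(P_opt(X|Y)), where h₂(t) = −t·log t − (1−t)·log(1−t) is the binary entropy (with the convention 0·log 0 = 0). -/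
/-- **Fano's inequality.**
For a joint pmf `P` on `X × Y` with `|X| = m ≥ 2`, the conditional Shannon entropy
`H(X|Y) = -∑_{(x,y) : P(x,y) > 0} P(x,y) log (P(x,y) / P_Y(y))` satisfies
`H(X|Y) ≤ (1 - P_opt) log (m-1) + h₂(P_opt)` where `P_opt = ∑ y, max_x P(x,y)`
and `h₂` is the binary entropy (with `0 log 0 = 0`; note `Real.log 0 = 0`). -/
theorem fano_inequality {X Y : Type*} [Fintype X] [Fintype Y] (m : ℕ)
    (hm : Fintype.card X = m) (hm2 : 2 ≤ m)
    (P : X × Y → ℝ) (hP0 : ∀ z, 0 ≤ P z) (hP1 : ∑ z, P z = 1)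
    (Popt : ℝ) (hPopt : Popt = ∑ y, ⨆ x, P (x, y)) :
    (∑ z : X × Y,
        if 0 < P z then -(P z * Real.log (P z / (∑ x, P (x, z.2)))) else 0) ≤
      (1 - Popt) * Real.log ((m : ℝ) - 1) +
        (-(Popt * Real.log Popt) - (1 - Popt) * Real.log (1 - Popt)) := by
  classical
  haveI : Nonempty X := Fintype.card_pos_iff.mp (by omega)
  have hmR : (1 : ℝ) ≤ (m : ℝ) - 1 := by
    have : (2 : ℝ) ≤ (m : ℝ) := by exact_mod_cast hm2
    linarith
  -- choose argmax
  have hex : ∀ y : Y, ∃ x, ∀ x', P (x', y) ≤ P (x, y) := by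
    intro y
    obtain ⟨x, -, hx⟩ := Finset.exists_max_image Finset.univ (fun x => P (x, y))
      ⟨Classical.arbitrary X, Finset.mem_univ _⟩
    exact ⟨x, fun x' => hx x' (Finset.mem_univ _)⟩
  choose f hf using hex
  have hsup : ∀ y, (⨆ x, P (x, y)) = P (f y, y) := fun y =>
    le_antisymm (ciSup_le fun x => hf y x)
      (le_ciSup (f := fun x => P (x, y)) (Set.Finite.bddAbove (Set.finite_range _)) (f y))
  have hPopt_eq : Popt = ∑ y, P (f y, y) := by
    rw [hPopt]; exact Finset.sum_congr rfl fun y _ => hsup y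
  have hswap : ∀ g : X × Y → ℝ, ∑ z : X × Y, g z = ∑ y, ∑ x, g (x, y) := by
    intro g
    rw [Fintype.sum_prod_type]
    exact Finset.sum_comm
  -- key sums
  have hA : ∑ z : X × Y, (if z.1 = f z.2 then P z else 0) = Popt := by
    rw [hswap, hPopt_eq]
    refine Finset.sum_congr rfl fun y _ => ?_
    simp [Finset.sum_ite_eq']
  have hB : ∑ z : X × Y, (if z.1 = f z.2 then 0 else P z) = 1 - Popt := by
    have h : ∑ z : X × Y, ((if z.1 = f z.2 then P z else 0) + (if z.1 = f z.2 then 0 else P z)) = 1 := by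
      rw [← hP1]
      exact Finset.sum_congr rfl fun z _ => by split_ifs <;> ring
    rw [Finset.sum_add_distrib, hA] at h
    linarith
  have hPopt0 : 0 ≤ Popt := hPopt_eq ▸ Finset.sum_nonneg fun y _ => hP0 _
  have hPopt_le1 : Popt ≤ 1 := by
    have h0 : 0 ≤ 1 - Popt := hB ▸ Finset.sum_nonneg fun z _ => by
      split_ifs with h
      · exact le_refl 0
      · exact hP0 z
    linarith
  set c : ℝ := (1 - Popt) / ((m : ℝ) - 1) with hc_def
  have hc0 : 0 ≤ c := div_nonneg (by linarith) (by linarith)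
  set Q : X × Y → ℝ := fun z => if z.1 = f z.2 then Popt else c with hQ
  have hQ0 : ∀ z, 0 ≤ Q z := by
    intro z; simp only [hQ]; split_ifs
    · exact hPopt0
    · exact hc0
  have hQpos : ∀ z, 0 < P z → 0 < Q z := by
    rintro ⟨a, b⟩ hz
    simp only [hQ]
    split_ifs with h
    · have h1 : P (f b, b) ≤ Popt :=
        hPopt_eq ▸ Finset.single_le_sum (fun y _ => hP0 (f y, y)) (Finset.mem_univ b)
      have h2 : P (a, b) = P (f b, b) := by rw [show a = f b from h]
      linarith
    · apply div_pos _ (by linarith)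
      rcases lt_or_eq_of_le hPopt_le1 with h1 | h1
      · linarith
      · exfalso
        have hsum0 : ∑ z : X × Y, (if z.1 = f z.2 then 0 else P z) = 0 := by
          rw [hB, ← h1]; ring
        have hnn : ∀ z ∈ (Finset.univ : Finset (X × Y)),
            (0:ℝ) ≤ if z.1 = f z.2 then 0 else P z := by
          intro z _
          split_ifs
          · exact le_refl 0
          · exact hP0 z
        have hz0 := (Finset.sum_eq_zero_iff_of_nonneg hnn).mp hsum0 (a, b)
          (Finset.mem_univ (a, b))
        simp only [h, if_false] at hz0
        linarith
  have hsumQ : ∀ y, ∑ x, Q (x, y) = 1 := by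
    intro y
    have hcard : (Finset.univ : Finset X).card = m := by rw [Finset.card_univ, hm]
    have h1 : ∑ x : X, Q (x, y) = ∑ x : X, (c + if x = f y then Popt - c else 0) := by
      refine Finset.sum_congr rfl fun x _ => ?_
      simp only [hQ]
      split_ifs <;> ring
    rw [h1, Finset.sum_add_distrib, Finset.sum_const, hcard, Finset.sum_ite_eq'
      Finset.univ (f y) (fun _ => Popt - c)]
    simp only [Finset.mem_univ, if_true, nsmul_eq_mul]
    have hmc : ((m : ℝ) - 1) * c = 1 - Popt := by
      rw [hc_def]
      field_simp
    linarith
  have hPYpos : ∀ z : X × Y, 0 < P z → 0 < ∑ x, P (x, z.2) := by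
    rintro ⟨a, b⟩ hz
    exact lt_of_lt_of_le hz (Finset.single_le_sum (fun x _ => hP0 (x, b)) (Finset.mem_univ a))
  have hPYnn : ∀ z : X × Y, (0:ℝ) ≤ ∑ x, P (x, z.2) := fun z =>
    Finset.sum_nonneg fun x _ => hP0 _
  -- pointwise Gibbs bound
  have key : ∀ z : X × Y,
      (if 0 < P z then -(P z * Real.log (P z / (∑ x, P (x, z.2)))) else 0)
        ≤ P z * (-Real.log (Q z)) + (Q z * (∑ x, P (x, z.2)) - P z) := by
    intro z
    by_cases hz : 0 < P z
    · rw [if_pos hz]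
      have hQz := hQpos z hz
      have hPY := hPYpos z hz
      have ht : 0 < Q z * (∑ x, P (x, z.2)) / P z := by positivity
      have hlog := Real.log_le_sub_one_of_pos ht
      have h1 : P z * Real.log (Q z * (∑ x, P (x, z.2)) / P z)
          ≤ P z * (Q z * (∑ x, P (x, z.2)) / P z - 1) :=
        mul_le_mul_of_nonneg_left hlog hz.le
      rw [Real.log_div (by positivity) hz.ne', Real.log_mul hQz.ne' hPY.ne'] at h1
      have h2 : P z * (Q z * (∑ x, P (x, z.2)) / P z - 1)
          = Q z * (∑ x, P (x, z.2)) - P z := by field_simp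
      rw [h2] at h1
      rw [Real.log_div hz.ne' hPY.ne']
      nlinarith [h1]
    · rw [if_neg hz]
      have hz0 : P z = 0 := le_antisymm (not_lt.mp hz) (hP0 z)
      have h3 : 0 ≤ Q z * (∑ x, P (x, z.2)) := mul_nonneg (hQ0 z) (hPYnn z)
      rw [hz0]
      simp only [zero_mul, sub_zero, zero_add]
      exact h3
  -- sum up
  have hQPY : ∑ z : X × Y, Q z * (∑ x, P (x, z.2)) = 1 := by
    have h1 : ∀ y : Y, ∑ x, Q (x, y) * (∑ x', P (x', y)) = ∑ x', P (x', y) := by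
      intro y
      rw [← Finset.sum_mul, hsumQ, one_mul]
    calc ∑ z : X × Y, Q z * (∑ x, P (x, z.2))
        = ∑ y, ∑ x, Q (x, y) * (∑ x', P (x', y)) := hswap _
      _ = ∑ y, ∑ x', P (x', y) := Finset.sum_congr rfl fun y _ => h1 y
      _ = 1 := by rw [← hswap, hP1]
  have step1 : (∑ z : X × Y,
      if 0 < P z then -(P z * Real.log (P z / (∑ x, P (x, z.2)))) else 0)
        ≤ ∑ z : X × Y, P z * (-Real.log (Q z)) := by
    calc (∑ z : X × Y,
        if 0 < P z then -(P z * Real.log (P z / (∑ x, P (x, z.2)))) else 0)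
        ≤ ∑ z : X × Y, (P z * (-Real.log (Q z)) + (Q z * (∑ x, P (x, z.2)) - P z)) :=
          Finset.sum_le_sum fun z _ => key z
      _ = (∑ z : X × Y, P z * (-Real.log (Q z)))
            + ((∑ z : X × Y, Q z * (∑ x, P (x, z.2))) - ∑ z : X × Y, P z) := by
          rw [Finset.sum_add_distrib, Finset.sum_sub_distrib]
      _ = ∑ z : X × Y, P z * (-Real.log (Q z)) := by rw [hQPY, hP1]; ring
  have step2 : ∑ z : X × Y, P z * (-Real.log (Q z))
      = Popt * (-Real.log Popt) + (1 - Popt) * (-Real.log c) := by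
    have h : ∀ z : X × Y, P z * (-Real.log (Q z))
        = (if z.1 = f z.2 then P z else 0) * (-Real.log Popt)
          + (if z.1 = f z.2 then 0 else P z) * (-Real.log c) := by
      intro z
      simp only [hQ]
      split_ifs <;> ring
    rw [Finset.sum_congr rfl fun z _ => h z, Finset.sum_add_distrib,
      ← Finset.sum_mul, ← Finset.sum_mul, hA, hB]
  have final : Popt * (-Real.log Popt) + (1 - Popt) * (-Real.log c)
      = (1 - Popt) * Real.log ((m : ℝ) - 1) +
        (-(Popt * Real.log Popt) - (1 - Popt) * Real.log (1 - Popt)) := by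
    by_cases h : Popt = 1
    · simp [h, hc_def, Real.log_one]
    · have h1 : (1 : ℝ) - Popt ≠ 0 := sub_ne_zero.mpr (Ne.symm h)
      have hc_log : Real.log c = Real.log (1 - Popt) - Real.log ((m : ℝ) - 1) := by
        rw [hc_def, Real.log_div h1 (by linarith)]
      rw [hc_log]; ring
  rw [step2, final] at step1
  exact step1
end

section
/- Let X and Y be finite sets with |X| = m, and let P be a probability mass function on X × Y. Define the optimal guessing probability P_opt(X|Y) = ∑_y max_x P(x,y). Then the infimum over all probability mass functions σ on Y with σ(y) > 0 for all y of D_∞(P, π_X ⊗ σ) equals log( m · P_opt(X|Y) ), where D_∞(P,Q) = max_{(x,y) : P(x,y)>0} log( P(x,y) / Q(x,y) ) and π_X ⊗ σ is the distribution (x,y) ↦ σ(y)/m. -/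
/-- **Rényi-∞ divergence and the optimal guessing probability.**
For a joint pmf `P` on `X × Y` with `|X| = m`, the infimum over all strictly positive
pmfs `σ` on `Y` of `D_∞(P, π_X ⊗ σ) = max_{z : P z > 0} log (P z / (σ(z.2)/m))`
equals `log (m * P_opt(X|Y))` with `P_opt(X|Y) = ∑ y, max_x P (x, y)`. -/
theorem renyi_inf_opt_guessing {X Y : Type*} [Fintype X] [Fintype Y] (m : ℕ)
    (hm : Fintype.card X = m)
    (P : X × Y → ℝ) (hP0 : ∀ z, 0 ≤ P z) (hP1 : ∑ z, P z = 1)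
    (Popt : ℝ) (hPopt : Popt = ∑ y, ⨆ x, P (x, y)) :
    IsGLB {c : ℝ | ∃ σ : Y → ℝ, (∀ y, 0 < σ y) ∧ (∑ y, σ y = 1) ∧
        c = sSup {r : ℝ | ∃ z : X × Y, 0 < P z ∧ r = Real.log (P z / (σ z.2 / m))}}
      (Real.log ((m : ℝ) * Popt)) := by
  -- nonemptiness of X and Y
  have hXne : Nonempty X := by
    by_contra h
    have : IsEmpty X := not_nonempty_iff.mp h
    have : IsEmpty (X × Y) := inferInstance
    simp at hP1
  have hYne : Nonempty Y := by
    by_contra h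
    have : IsEmpty Y := not_nonempty_iff.mp h
    have : IsEmpty (X × Y) := inferInstance
    simp at hP1
  have hmpos : 0 < m := by
    rw [← hm]; exact Fintype.card_pos
  have hmR : (0:ℝ) < m := by exact_mod_cast hmpos
  set f : Y → ℝ := fun y => ⨆ x, P (x, y) with hf
  have hfge : ∀ x y, P (x, y) ≤ f y := fun x y =>
    le_ciSup (Set.Finite.bddAbove (Set.finite_range (fun x => P (x, y)))) x
  have hfattain : ∀ y, ∃ x, f y = P (x, y) := by
    intro y
    obtain ⟨x0, hx0⟩ := Finite.exists_max (fun x => P (x, y))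
    exact ⟨x0, le_antisymm (ciSup_le hx0) (hfge x0 y)⟩
  have hfnn : ∀ y, 0 ≤ f y := fun y =>
    le_trans (hP0 (Classical.arbitrary X, y)) (hfge _ y)
  -- some positive mass
  obtain ⟨z0, hz0⟩ : ∃ z : X × Y, 0 < P z := by
    by_contra h
    push_neg at h
    have : ∑ z, P z = 0 := Finset.sum_eq_zero fun z _ => le_antisymm (h z) (hP0 z)
    rw [hP1] at this; norm_num at this
  have hPoptpos : 0 < Popt := by
    rw [hPopt]
    calc (0:ℝ) < P z0 := hz0
    _ ≤ f z0.2 := hfge z0.1 z0.2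
    _ ≤ ∑ y, f y := Finset.single_le_sum (fun y _ => hfnn y) (Finset.mem_univ _)
  have hmPopt : (0:ℝ) < m * Popt := mul_pos hmR hPoptpos
  constructor
  · -- lower bound
    rintro c ⟨σ, hσpos, hσsum, rfl⟩
    -- bddAbove of the set
    have hSfin : ({r : ℝ | ∃ z : X × Y, 0 < P z ∧ r = Real.log (P z / (σ z.2 / m))}).Finite := by
      have : {r : ℝ | ∃ z : X × Y, 0 < P z ∧ r = Real.log (P z / (σ z.2 / m))}
          ⊆ Set.range (fun z : X × Y => Real.log (P z / (σ z.2 / m))) := by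
        rintro r ⟨z, _, rfl⟩; exact ⟨z, rfl⟩
      exact (Set.finite_range _).subset this
    obtain ⟨y0, hy0⟩ : ∃ y, Popt * σ y ≤ f y := by
      by_contra h
      push_neg at h
      have : ∑ y, f y < ∑ y, Popt * σ y :=
        Finset.sum_lt_sum_of_nonempty Finset.univ_nonempty (fun y _ => h y)
      rw [← Finset.mul_sum, hσsum, mul_one, ← hPopt] at this
      exact lt_irrefl _ this
    obtain ⟨x0, hx0⟩ := hfattain y0
    have hPz : 0 < P (x0, y0) := by
      rw [← hx0]; exact lt_of_lt_of_le (mul_pos hPoptpos (hσpos y0)) hy0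
    have hmem : Real.log (P (x0, y0) / (σ y0 / m)) ∈
        {r : ℝ | ∃ z : X × Y, 0 < P z ∧ r = Real.log (P z / (σ z.2 / m))} :=
      ⟨(x0, y0), hPz, rfl⟩
    have hle : Real.log ((m : ℝ) * Popt) ≤ Real.log (P (x0, y0) / (σ y0 / m)) := by
      apply Real.log_le_log hmPopt
      rw [div_div_eq_mul_div, le_div_iff₀ (hσpos y0)]
      calc (m : ℝ) * Popt * σ y0 = (m : ℝ) * (Popt * σ y0) := by ring
        _ ≤ (m : ℝ) * f y0 := mul_le_mul_of_nonneg_left hy0 (le_of_lt hmR)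
        _ = P (x0, y0) * m := by rw [hx0]; ring
    exact le_trans hle (le_csSup hSfin.bddAbove hmem)
  · -- greatest lower bound
    intro b hb
    -- for each n, construct σ_n
    have key : ∀ n : ℕ, b ≤ Real.log ((m : ℝ) * (Popt + (Fintype.card Y : ℝ) * (1 / (n + 1)))) := by
      intro n
      set ε : ℝ := 1 / (n + 1) with hε
      have hεpos : 0 < ε := by positivity
      set T : ℝ := Popt + (Fintype.card Y : ℝ) * ε with hT
      have hTpos : 0 < T := by
        have : (0:ℝ) ≤ (Fintype.card Y : ℝ) * ε := by positivity
        linarith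
      set σ : Y → ℝ := fun y => (f y + ε) / T with hσ
      have hσpos : ∀ y, 0 < σ y := fun y => div_pos (by linarith [hfnn y]) hTpos
      have hσsum : ∑ y, σ y = 1 := by
        have h2 : ∑ y, σ y = (∑ y, (f y + ε)) / T := by rw [Finset.sum_div]
        rw [h2, Finset.sum_add_distrib, Finset.sum_const, nsmul_eq_mul,
          Finset.card_univ, ← hPopt, ← hT]
        exact div_self (ne_of_gt hTpos)
      have hmem : sSup {r : ℝ | ∃ z : X × Y, 0 < P z ∧ r = Real.log (P z / (σ z.2 / m))} ∈
          {c : ℝ | ∃ σ : Y → ℝ, (∀ y, 0 < σ y) ∧ (∑ y, σ y = 1) ∧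
            c = sSup {r : ℝ | ∃ z : X × Y, 0 < P z ∧ r = Real.log (P z / (σ z.2 / m))}} :=
        ⟨σ, hσpos, hσsum, rfl⟩
      have hne : ({r : ℝ | ∃ z : X × Y, 0 < P z ∧ r = Real.log (P z / (σ z.2 / m))}).Nonempty :=
        ⟨_, z0, hz0, rfl⟩
      have hub : sSup {r : ℝ | ∃ z : X × Y, 0 < P z ∧ r = Real.log (P z / (σ z.2 / m))}
          ≤ Real.log ((m : ℝ) * T) := by
        apply csSup_le hne
        rintro r ⟨z, hPz, rfl⟩
        have h1 : P z / (σ z.2 / m) ≤ (m : ℝ) * T := by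
          rw [hσ, div_div_eq_mul_div]
          rw [div_le_iff₀ (div_pos (by linarith [hfnn z.2]) hTpos)]
          have hfz : P z ≤ f z.2 + ε := le_trans (hfge z.1 z.2) (by linarith)
          calc P z * (m : ℝ) ≤ (f z.2 + ε) * m :=
                mul_le_mul_of_nonneg_right hfz (le_of_lt hmR)
            _ = (m : ℝ) * T * ((f z.2 + ε) / T) := by field_simp
        exact Real.log_le_log (div_pos hPz (div_pos (hσpos z.2) hmR)) h1
      calc b ≤ sSup {r : ℝ | ∃ z : X × Y, 0 < P z ∧ r = Real.log (P z / (σ z.2 / m))} := hb hmem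
      _ ≤ Real.log ((m : ℝ) * T) := hub
      _ = Real.log ((m : ℝ) * (Popt + (Fintype.card Y : ℝ) * (1 / (n + 1)))) := by rw [hT, hε]
    -- take limit
    have htend : Filter.Tendsto
        (fun n : ℕ => Real.log ((m : ℝ) * (Popt + (Fintype.card Y : ℝ) * (1 / (n + 1)))))
        Filter.atTop (nhds (Real.log ((m : ℝ) * Popt))) := by
      have h1 : Filter.Tendsto (fun n : ℕ => (1 : ℝ) / (n + 1)) Filter.atTop (nhds 0) :=
        tendsto_one_div_add_atTop_nhds_zero_nat
      have h2 : Filter.Tendsto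
          (fun n : ℕ => (m : ℝ) * (Popt + (Fintype.card Y : ℝ) * (1 / (n + 1))))
          Filter.atTop (nhds ((m : ℝ) * Popt)) := by
        have := (h1.const_mul (Fintype.card Y : ℝ)).const_add Popt |>.const_mul (m : ℝ)
        simpa using this
      exact ((Real.continuousAt_log (ne_of_gt hmPopt)).tendsto.comp h2)
    exact ge_of_tendsto' htend key
end

section
/- Let X and Y be finite sets with |X| = m ≥ 2, and let P be a probability mass function on X × Y whose Y-marginal P_Y is strictly positive. Let P_opt(X|Y) = ∑_y max_x P(x,y) and P_pg(X|Y) = ∑_y ∑_x P(x,y)² / P_Y(y). Then P_pg(X|Y) ≥ P_opt(X|Y)² + (1 − P_opt(X|Y))² / (m − 1). -/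
/-- **Pretty good vs optimal guessing.**
For a joint pmf `P` on `X × Y` with `|X| = m ≥ 2` and strictly positive `Y`-marginal,
the pretty good guessing probability `P_pg = ∑_y ∑_x P(x,y)²/P_Y(y)` satisfies
`P_pg ≥ P_opt² + (1 - P_opt)²/(m-1)` where `P_opt = ∑_y max_x P(x,y)`. -/
theorem pretty_good_vs_optimal {X Y : Type*} [Fintype X] [Fintype Y] (m : ℕ)
    (hm : Fintype.card X = m) (hm2 : 2 ≤ m)
    (P : X × Y → ℝ) (hP0 : ∀ z, 0 ≤ P z) (hP1 : ∑ z, P z = 1)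
    (hPY : ∀ y, 0 < ∑ x, P (x, y))
    (Popt Ppg : ℝ)
    (hPopt : Popt = ∑ y, ⨆ x, P (x, y))
    (hPpg : Ppg = ∑ y, ∑ x, P (x, y) ^ 2 / (∑ x', P (x', y))) :
    Ppg ≥ Popt ^ 2 + (1 - Popt) ^ 2 / ((m : ℝ) - 1) := by
  have hXne : Nonempty X := by
    rw [← Fintype.card_pos_iff, hm]; omega
  -- notation
  set q : Y → ℝ := fun y => ∑ x, P (x, y) with hq
  set M : Y → ℝ := fun y => ⨆ x, P (x, y) with hM
  -- choose maximizers
  classical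
  have hmax : ∀ y : Y, ∃ x0 : X, P (x0, y) = M y ∧ ∀ x, P (x, y) ≤ M y := by
    intro y
    obtain ⟨x0, hx0⟩ := Finite.exists_max (fun x => P (x, y))
    have hb : BddAbove (Set.range fun x => P (x, y)) :=
      Set.Finite.bddAbove (Set.finite_range _)
    exact ⟨x0, le_antisymm (le_ciSup hb x0) (ciSup_le hx0),
      fun x => (hx0 x).trans (le_ciSup hb x0)⟩
  choose x0 hx0 hxle using hmax
  have hm1 : (0:ℝ) < (m:ℝ) - 1 := by
    have : (2:ℝ) ≤ (m:ℝ) := by exact_mod_cast hm2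
    linarith
  -- per-y lower bound on ∑_x P(x,y)^2
  have key : ∀ y, M y ^ 2 + (q y - M y) ^ 2 / ((m:ℝ) - 1) ≤ ∑ x, P (x, y) ^ 2 := by
    intro y
    have hsplit : ∑ x, P (x, y) ^ 2
        = P (x0 y, y) ^ 2 + ∑ x ∈ Finset.univ.erase (x0 y), P (x, y) ^ 2 := by
      rw [← Finset.add_sum_erase _ _ (Finset.mem_univ (x0 y))]
    have hsplit' : q y = P (x0 y, y) + ∑ x ∈ Finset.univ.erase (x0 y), P (x, y) := by
      show ∑ x, P (x, y) = _
      rw [← Finset.add_sum_erase _ _ (Finset.mem_univ (x0 y))]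
    have hcard : ((Finset.univ.erase (x0 y)).card : ℝ) = (m:ℝ) - 1 := by
      rw [Finset.card_erase_of_mem (Finset.mem_univ _), Finset.card_univ, hm]
      push_cast [Nat.cast_sub (by omega : 1 ≤ m)]
      ring
    have hcs := sq_sum_le_card_mul_sum_sq (s := Finset.univ.erase (x0 y))
      (f := fun x => P (x, y))
    rw [hcard] at hcs
    have hrest : (q y - M y) ^ 2 / ((m:ℝ) - 1)
        ≤ ∑ x ∈ Finset.univ.erase (x0 y), P (x, y) ^ 2 := by
      rw [div_le_iff₀ hm1]
      calc (q y - M y) ^ 2 = (∑ x ∈ Finset.univ.erase (x0 y), P (x, y)) ^ 2 := by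
            rw [hsplit', hx0]; ring_nf
        _ ≤ ((m:ℝ) - 1) * ∑ x ∈ Finset.univ.erase (x0 y), P (x, y) ^ 2 := hcs
        _ = (∑ x ∈ Finset.univ.erase (x0 y), P (x, y) ^ 2) * ((m:ℝ) - 1) := by ring
    rw [hsplit, hx0 y]
    linarith [hrest]
  have hq1 : ∑ y, q y = 1 := by
    rw [hq, ← hP1, ← Fintype.sum_prod_type_right]
  -- Engel form twice
  have e1 : Popt ^ 2 ≤ ∑ y, M y ^ 2 / q y := by
    have := Finset.sq_sum_div_le_sum_sq_div Finset.univ M (g := q)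
      (fun y _ => hPY y)
    rwa [hq1, div_one, ← hPopt] at this
  have e2 : (1 - Popt) ^ 2 ≤ ∑ y, (q y - M y) ^ 2 / q y := by
    have := Finset.sq_sum_div_le_sum_sq_div Finset.univ (fun y => q y - M y) (g := q)
      (fun y _ => hPY y)
    rwa [hq1, div_one, Finset.sum_sub_distrib, hq1, ← hPopt] at this
  -- combine
  have main : ∑ y, (M y ^ 2 / q y + (q y - M y) ^ 2 / ((m:ℝ) - 1) / q y) ≤ Ppg := by
    rw [hPpg]
    apply Finset.sum_le_sum
    intro y _
    rw [← Finset.sum_div, ← add_div]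
    gcongr
    · exact (hPY y).le
    · exact key y
  rw [Finset.sum_add_distrib] at main
  have e2' : (1 - Popt) ^ 2 / ((m:ℝ) - 1) ≤ (∑ y, (q y - M y) ^ 2 / q y) / ((m:ℝ) - 1) := by
    gcongr
  have hsum : ∑ y, (q y - M y) ^ 2 / ((m:ℝ) - 1) / q y
      = (∑ y, (q y - M y) ^ 2 / q y) / ((m:ℝ) - 1) := by
    rw [Finset.sum_div]
    apply Finset.sum_congr rfl
    intro y _
    field_simp
  rw [hsum] at main
  linarith
end

section
/- Let X and Y be finite sets, and let P be a probability mass function on X × Y whose Y-marginal P_Y is strictly positive. Let P_opt(X|Y) = ∑_y max_x P(x,y) and P_pg(X|Y) = ∑_y ∑_x P(x,y)² / P_Y(y). Then P_pg(X|Y) ≥ P_opt(X|Y)². -/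
/-- **Pretty good vs optimal guessing (weaker form).**
For a joint pmf `P` on `X × Y` with strictly positive `Y`-marginal, the pretty good
guessing probability `P_pg = ∑_y ∑_x P(x,y)²/P_Y(y)` satisfies `P_pg ≥ P_opt²`
where `P_opt = ∑_y max_x P(x,y)`. -/
theorem pretty_good_ge_optimal_sq {X Y : Type*} [Fintype X] [Fintype Y]
    (P : X × Y → ℝ) (hP0 : ∀ z, 0 ≤ P z) (hP1 : ∑ z, P z = 1)
    (hPY : ∀ y, 0 < ∑ x, P (x, y))
    (Popt Ppg : ℝ)
    (hPopt : Popt = ∑ y, ⨆ x, P (x, y))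
    (hPpg : Ppg = ∑ y, ∑ x, P (x, y) ^ 2 / (∑ x', P (x', y))) :
    Ppg ≥ Popt ^ 2 := by
  have hX : Nonempty X := by
    by_contra h
    rw [not_nonempty_iff] at h
    have hy : Nonempty Y := by
      by_contra h'
      rw [not_nonempty_iff] at h'
      rw [Fintype.sum_empty] at hP1
      exact one_ne_zero hP1.symm
    have := hPY (Classical.arbitrary Y)
    simp at this
  set M : Y → ℝ := fun y => ⨆ x, P (x, y) with hM
  set s : Y → ℝ := fun y => ∑ x, P (x, y) with hs
  have hs1 : ∑ y, s y = 1 := by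
    rw [← hP1, Fintype.sum_prod_type]
    exact Finset.sum_comm.symm
  have hMeq : ∀ y, ∃ x, M y = P (x, y) := by
    intro y
    obtain ⟨x₀, h⟩ := Finite.exists_max (fun x => P (x, y))
    exact ⟨x₀, le_antisymm (ciSup_le h) (le_ciSup (Finite.bddAbove_range fun x => P (x, y)) x₀)⟩
  have hMsq : ∀ y, (M y) ^ 2 / s y ≤ ∑ x, P (x, y) ^ 2 / s y := by
    intro y
    rw [← Finset.sum_div]
    gcongr ?_ / s y
    · exact le_of_lt (hPY y)
    obtain ⟨x₀, hx₀⟩ := hMeq y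
    rw [hx₀]
    exact Finset.single_le_sum (fun x _ => sq_nonneg (P (x, y))) (Finset.mem_univ x₀)
  have hcs : (∑ y, M y) ^ 2 ≤ ∑ y, (M y) ^ 2 / s y := by
    have h := Finset.sq_sum_div_le_sum_sq_div Finset.univ M (g := s)
      (fun y _ => hPY y)
    rwa [hs1, div_one] at h
  calc Popt ^ 2 = (∑ y, M y) ^ 2 := by rw [hPopt]
    _ ≤ ∑ y, (M y) ^ 2 / s y := hcs
    _ ≤ ∑ y, ∑ x, P (x, y) ^ 2 / s y := Finset.sum_le_sum fun y _ => hMsq y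
    _ = Ppg := hPpg.symm
end

section
/- Fix an integer m ≥ 2 and p₀ ∈ [1/m, 1], and let P be the 'L distribution' on X = {0, 1, …, m−1} given by P(0) = p₀ and P(x) = (1 − p₀)/(m − 1) for x ≠ 0. Then the optimal guessing probability satisfies max_x P(x) = p₀, the sampling (pretty good) guessing probability satisfies ∑_x P(x)² = p₀² + (1 − p₀)²/(m − 1), and hence equality holds in the bound P_pg ≥ P_opt² + (1 − P_opt)²/(m − 1). -/
/-- **The L distribution attains equality in the pretty-good bound.**
For `m ≥ 2` and `p₀ ∈ [1/m, 1]`, the L distribution `P` on `Fin m` with `P 0 = p₀`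
and `P x = (1-p₀)/(m-1)` for `x ≠ 0` has optimal guessing probability
`max_x P x = p₀`, pretty good (sampling) guessing probability
`∑_x P x² = p₀² + (1-p₀)²/(m-1)`, hence equality holds in
`P_pg ≥ P_opt² + (1-P_opt)²/(m-1)`. -/
theorem L_distribution_equality (m : ℕ) (hm : 2 ≤ m) (p₀ : ℝ)
    (hp₀ : p₀ ∈ Set.Icc (1 / (m : ℝ)) 1)
    (P : Fin m → ℝ)
    (hP : ∀ x, P x = if x.val = 0 then p₀ else (1 - p₀) / ((m : ℝ) - 1)) :
    (⨆ x, P x) = p₀ ∧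
      (∑ x, P x ^ 2) = p₀ ^ 2 + (1 - p₀) ^ 2 / ((m : ℝ) - 1) ∧
      (∑ x, P x ^ 2) = (⨆ x, P x) ^ 2 + (1 - ⨆ x, P x) ^ 2 / ((m : ℝ) - 1) := by
  obtain ⟨k, rfl⟩ : ∃ k, m = k + 1 := ⟨m - 1, by omega⟩
  have hk : 1 ≤ k := by omega
  have hm1 : (1:ℝ) ≤ (k:ℝ) := by exact_mod_cast hk
  have hmpos : (0:ℝ) < (k:ℝ) := by linarith
  have hcast : ((k + 1 : ℕ) : ℝ) - 1 = (k : ℝ) := by push_cast; ring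
  have hmR : (0:ℝ) < ((k+1:ℕ):ℝ) := by push_cast; linarith
  have hle : (1 - p₀) / (((k+1:ℕ) : ℝ) - 1) ≤ p₀ := by
    rw [hcast, div_le_iff₀ hmpos]
    have h1 : 1 / ((k+1:ℕ):ℝ) ≤ p₀ := hp₀.1
    rw [div_le_iff₀ hmR] at h1
    push_cast at h1 ⊢
    nlinarith
  have hP0 : P 0 = p₀ := by rw [hP]; simp
  have hsup : (⨆ x, P x) = p₀ := by
    apply le_antisymm
    · apply ciSup_le
      intro x
      rw [hP]
      split
      · exact le_refl p₀
      · exact hle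
    · rw [← hP0]
      exact le_ciSup (Set.Finite.bddAbove (Set.finite_range P)) 0
  have hsum : (∑ x, P x ^ 2) = p₀ ^ 2 + (1 - p₀) ^ 2 / (((k+1:ℕ) : ℝ) - 1) := by
    rw [Fin.sum_univ_succ]
    rw [hP0, hcast]
    have : ∀ i : Fin k, P i.succ ^ 2 = ((1 - p₀) / (k : ℝ)) ^ 2 := by
      intro i
      rw [hP, if_neg (by simp [Fin.val_succ]), hcast]
    rw [Finset.sum_congr rfl (fun i _ => this i), Finset.sum_const, Finset.card_univ,
      Fintype.card_fin, nsmul_eq_mul]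
    field_simp
  exact ⟨hsup, hsum, by rw [hsup]; exact hsum⟩
end

section
/- Let X and Y be finite sets with |X| = m ≥ 2, let P be a probability mass function on X × Y, and let σ be any probability mass function on Y. Let P_opt = ∑_y max_x P(x,y) be the optimal guessing probability. Then the squared Bhattacharyya fidelity between P and the product distribution π_X ⊗ σ satisfies ( ∑_{x,y} √( P(x,y) · σ(y)/m ) )² ≤ (1/m) · ( √P_opt + √(m − 1) · √(1 − P_opt) )². -/
/-- **Fidelity–guessing bound (classical).**
For a joint pmf `P` on `X × Y` with `|X| = m ≥ 2` and any pmf `σ` on `Y`, the squared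
Bhattacharyya fidelity between `P` and the product `π_X ⊗ σ` is at most
`(1/m)(√P_opt + √(m-1)·√(1-P_opt))²`, where `P_opt = ∑_y max_x P(x,y)`. -/
theorem fidelity_guessing_bound {X Y : Type*} [Fintype X] [Fintype Y] (m : ℕ)
    (hm : Fintype.card X = m) (hm2 : 2 ≤ m)
    (P : X × Y → ℝ) (hP0 : ∀ z, 0 ≤ P z) (hP1 : ∑ z, P z = 1)
    (σ : Y → ℝ) (hσ0 : ∀ y, 0 ≤ σ y) (hσ1 : ∑ y, σ y = 1)
    (Popt : ℝ) (hPopt : Popt = ∑ y, ⨆ x, P (x, y)) :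
    (∑ z : X × Y, Real.sqrt (P z * (σ z.2 / m))) ^ 2 ≤
      (1 / (m : ℝ)) *
        (Real.sqrt Popt + Real.sqrt ((m : ℝ) - 1) * Real.sqrt (1 - Popt)) ^ 2 := by
  classical
  have hmpos : (0:ℝ) < m := by exact_mod_cast Nat.lt_of_lt_of_le (by norm_num) hm2
  have hXne : Nonempty X := Fintype.card_pos_iff.mp (by omega)
  -- argmax
  have hax : ∀ y : Y, ∃ x : X, ∀ x', P (x', y) ≤ P (x, y) :=
    fun y => Finite.exists_max fun x => P (x, y)
  choose xs hxs using hax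
  set M : Y → ℝ := fun y => P (xs y, y) with hMdef
  have hMsup : ∀ y, (⨆ x, P (x, y)) = M y := fun y =>
    le_antisymm (ciSup_le (hxs y)) (le_ciSup (Finite.bddAbove_range fun x => P (x, y)) (xs y))
  have hM0 : ∀ y, 0 ≤ M y := fun y => hP0 _
  set S : Y → ℝ := fun y => ∑ x, P (x, y) with hSdef
  have hMS : ∀ y, M y ≤ S y := fun y =>
    Finset.single_le_sum (f := fun x => P (x, y)) (fun x _ => hP0 _) (Finset.mem_univ (xs y))
  have hSsum : ∑ y, S y = 1 := by
    rw [← hP1, Fintype.sum_prod_type]; exact Finset.sum_comm ..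

  have hPoptM : Popt = ∑ y, M y := by
    rw [hPopt]; exact Finset.sum_congr rfl fun y _ => hMsup y
  have hPopt0 : 0 ≤ Popt := by
    rw [hPoptM]; exact Finset.sum_nonneg fun y _ => hM0 y
  have hRsum : ∑ y, (S y - M y) = 1 - Popt := by
    rw [Finset.sum_sub_distrib, hSsum, hPoptM]
  have hPopt1 : Popt ≤ 1 := by
    have := Finset.sum_le_sum (fun y (_ : y ∈ Finset.univ) => hMS y)
    rw [hSsum] at this; rw [hPoptM]; linarith
  -- rewrite the fidelity sum
  have hF : (∑ z : X × Y, Real.sqrt (P z * (σ z.2 / m)))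
      = (1 / Real.sqrt m) * ∑ y, Real.sqrt (σ y) * ∑ x, Real.sqrt (P (x, y)) := by
    rw [Fintype.sum_prod_type, Finset.sum_comm, Finset.mul_sum]
    refine Finset.sum_congr rfl fun y _ => ?_
    rw [Finset.mul_sum, Finset.mul_sum]
    refine Finset.sum_congr rfl fun x _ => ?_
    rw [Real.sqrt_mul (hP0 _), Real.sqrt_div (hσ0 y)]
    ring
  -- per-y bound: ∑_x √P(x,y) ≤ √(M y) + √(m-1) * √(S y - M y)
  have hxbound : ∀ y, (∑ x, Real.sqrt (P (x, y)))
      ≤ Real.sqrt (M y) + Real.sqrt ((m:ℝ) - 1) * Real.sqrt (S y - M y) := by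
    intro y
    have hsplit : (∑ x, Real.sqrt (P (x, y)))
        = Real.sqrt (M y) + ∑ x ∈ Finset.univ.erase (xs y), Real.sqrt (P (x, y)) :=
      (Finset.add_sum_erase _ (fun x => Real.sqrt (P (x, y))) (Finset.mem_univ (xs y))).symm
    rw [hsplit]
    gcongr
    calc ∑ x ∈ Finset.univ.erase (xs y), Real.sqrt (P (x, y))
        = ∑ x ∈ Finset.univ.erase (xs y), Real.sqrt 1 * Real.sqrt (P (x, y)) := by
          simp
      _ ≤ Real.sqrt (∑ x ∈ Finset.univ.erase (xs y), (1:ℝ))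
          * Real.sqrt (∑ x ∈ Finset.univ.erase (xs y), P (x, y)) :=
          Real.sum_sqrt_mul_sqrt_le _ (fun _ => zero_le_one) (fun x => hP0 _)
      _ = Real.sqrt ((m:ℝ) - 1) * Real.sqrt (S y - M y) := by
          congr 1
          · congr 1
            rw [Finset.sum_const, Finset.card_erase_of_mem (Finset.mem_univ _)]
            simp [hm]
            push_cast [Nat.cast_sub (by omega : 1 ≤ m)]
            ring
          · congr 1
            rw [hSdef, hMdef]
            simp [Finset.sum_erase_eq_sub (Finset.mem_univ (xs y))]
  -- Cauchy-Schwarz over y, twice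
  have hA : (∑ y, Real.sqrt (σ y) * Real.sqrt (M y)) ≤ Real.sqrt Popt := by
    calc (∑ y, Real.sqrt (σ y) * Real.sqrt (M y))
        ≤ Real.sqrt (∑ y, σ y) * Real.sqrt (∑ y, M y) :=
          Real.sum_sqrt_mul_sqrt_le _ hσ0 hM0
      _ = Real.sqrt Popt := by rw [hσ1, hPoptM]; simp
  have hB : (∑ y, Real.sqrt (σ y) * Real.sqrt (S y - M y)) ≤ Real.sqrt (1 - Popt) := by
    calc (∑ y, Real.sqrt (σ y) * Real.sqrt (S y - M y))
        ≤ Real.sqrt (∑ y, σ y) * Real.sqrt (∑ y, (S y - M y)) :=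
          Real.sum_sqrt_mul_sqrt_le _ hσ0 (fun y => sub_nonneg.mpr (hMS y))
      _ = Real.sqrt (1 - Popt) := by rw [hσ1, hRsum]; simp
  -- combine
  set C : ℝ := Real.sqrt Popt + Real.sqrt ((m:ℝ) - 1) * Real.sqrt (1 - Popt) with hC
  have hC0 : 0 ≤ C := by positivity
  have hFle : (∑ z : X × Y, Real.sqrt (P z * (σ z.2 / m))) ≤ (1 / Real.sqrt m) * C := by
    rw [hF]
    have h1 : (∑ y, Real.sqrt (σ y) * ∑ x, Real.sqrt (P (x, y))) ≤ C := by
      calc (∑ y, Real.sqrt (σ y) * ∑ x, Real.sqrt (P (x, y)))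
          ≤ ∑ y, Real.sqrt (σ y) * (Real.sqrt (M y)
              + Real.sqrt ((m:ℝ) - 1) * Real.sqrt (S y - M y)) := by
            refine Finset.sum_le_sum fun y _ => ?_
            exact mul_le_mul_of_nonneg_left (hxbound y) (Real.sqrt_nonneg _)
        _ = (∑ y, Real.sqrt (σ y) * Real.sqrt (M y))
            + Real.sqrt ((m:ℝ) - 1) * ∑ y, Real.sqrt (σ y) * Real.sqrt (S y - M y) := by
            rw [Finset.mul_sum, ← Finset.sum_add_distrib]
            refine Finset.sum_congr rfl fun y _ => by ring
        _ ≤ C := by rw [hC]; gcongr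
    exact mul_le_mul_of_nonneg_left h1 (by positivity)
  have hF0 : 0 ≤ ∑ z : X × Y, Real.sqrt (P z * (σ z.2 / m)) :=
    Finset.sum_nonneg fun z _ => Real.sqrt_nonneg _
  calc (∑ z : X × Y, Real.sqrt (P z * (σ z.2 / m))) ^ 2
      ≤ ((1 / Real.sqrt m) * C) ^ 2 := by
        exact pow_le_pow_left₀ hF0 hFle 2
    _ = (1 / (m:ℝ)) * C ^ 2 := by
        rw [mul_pow, div_pow, one_pow, Real.sq_sqrt hmpos.le]
end

section
/- Let m > 1 be a real number and let x, z be real numbers with 1/m ≤ x ≤ 1 and 1/m ≤ z ≤ 1. If m·z = ( √x + √(m − 1) · √(1 − x) )², then (x, z) lies on the ellipse m·(x + z − 1)² + (m/(m − 1))·(x − z)² = 1. -/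
/-- **The uncertainty boundary is an ellipse.**
For real `m > 1` and `x, z ∈ [1/m, 1]`, if `m·z = (√x + √(m-1)·√(1-x))²` then
`(x, z)` lies on the ellipse `m·(x+z-1)² + (m/(m-1))·(x-z)² = 1`. -/
theorem uncertainty_boundary_ellipse (m x z : ℝ) (hm : 1 < m)
    (hx0 : 1 / m ≤ x) (hx1 : x ≤ 1) (hz0 : 1 / m ≤ z) (hz1 : z ≤ 1)
    (h : m * z = (Real.sqrt x + Real.sqrt (m - 1) * Real.sqrt (1 - x)) ^ 2) :
    m * (x + z - 1) ^ 2 + (m / (m - 1)) * (x - z) ^ 2 = 1 := by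
  have hm0 : (0:ℝ) < m := by linarith
  have hx : 0 ≤ x := le_trans (by positivity) hx0
  have hx1' : 0 ≤ 1 - x := by linarith
  have hc : 0 ≤ m - 1 := by linarith
  set u := Real.sqrt (m-1) * (Real.sqrt x * Real.sqrt (1-x)) with hu
  have hu2 : u ^ 2 = (m-1) * (x * (1-x)) := by
    simp [hu, mul_pow, Real.sq_sqrt hc, Real.sq_sqrt hx, Real.sq_sqrt hx1']
  have key : m * z = x + (m-1) * (1-x) + 2 * u := by
    rw [h, add_sq, mul_pow, Real.sq_sqrt hx, Real.sq_sqrt hc, Real.sq_sqrt hx1', hu]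
    ring
  have h1 : m * (x + z - 1) = 2*x - 1 + 2*u := by linear_combination key
  have h2 : m * (x - z) = (m-1) * (2*x - 1) - 2*u := by linear_combination -key
  have hne : m - 1 ≠ 0 := by linarith
  have G2 : (m-1) * (m*(x+z-1))^2 + (m*(x-z))^2 = m*(m-1) := by
    rw [h1, h2]; linear_combination 4*m*hu2
  have hmne : m ≠ 0 := ne_of_gt hm0
  have expand : m * (x + z - 1) ^ 2 + (m / (m - 1)) * (x - z) ^ 2 =
      ((m-1) * (m*(x+z-1))^2 + (m*(x-z))^2) / (m * (m-1)) := by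
    field_simp
  rw [expand, G2]
  field_simp
end

section
/- Let d ≥ 2 be an integer and θ ∈ [0, π/2]. Define x = (d·cos θ + sin θ)² / ( d·(d + sin 2θ) ) and z = (d·sin θ + cos θ)² / ( d·(d + sin 2θ) ). Then, with m = d², the pair (x, z) satisfies the ellipse equation m·(x + z − 1)² + (m/(m − 1))·(x − z)² = 1. -/
/-- **The monogamy boundary is attained.**
For integer `d ≥ 2` and `θ ∈ [0, π/2]`, the entanglement fidelities
`x = (d·cos θ + sin θ)²/(d(d + sin 2θ))` and `z = (d·sin θ + cos θ)²/(d(d + sin 2θ))`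
satisfy, with `m = d²`, the ellipse equation `m(x+z-1)² + (m/(m-1))(x-z)² = 1`. -/
theorem monogamy_state_on_ellipse (d : ℕ) (hd : 2 ≤ d) (θ : ℝ)
    (hθ : θ ∈ Set.Icc (0 : ℝ) (Real.pi / 2))
    (x z m : ℝ)
    (hx : x = ((d : ℝ) * Real.cos θ + Real.sin θ) ^ 2 /
        ((d : ℝ) * ((d : ℝ) + Real.sin (2 * θ))))
    (hz : z = ((d : ℝ) * Real.sin θ + Real.cos θ) ^ 2 /
        ((d : ℝ) * ((d : ℝ) + Real.sin (2 * θ))))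
    (hm : m = (d : ℝ) ^ 2) :
    m * (x + z - 1) ^ 2 + (m / (m - 1)) * (x - z) ^ 2 = 1 := by
  have hd2 : (2 : ℝ) ≤ (d : ℝ) := by exact_mod_cast hd
  set s := Real.sin θ
  set c := Real.cos θ
  have hpyth : s ^ 2 + c ^ 2 = 1 := Real.sin_sq_add_cos_sq θ
  have h2 : Real.sin (2 * θ) = 2 * s * c := Real.sin_two_mul θ
  have hs1 : -1 ≤ 2 * s * c := by rw [← h2]; exact Real.neg_one_le_sin _
  have hm1 : (d:ℝ) ^ 2 - 1 ≠ 0 := by nlinarith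
  have hq : (2 * s * c) ^ 2 + (c ^ 2 - s ^ 2) ^ 2 = 1 := by
    linear_combination (s ^ 2 + c ^ 2 + 1) * hpyth
  have hDpos : (0:ℝ) < (d : ℝ) + 2 * s * c := by linarith
  have hDne : (d : ℝ) * ((d : ℝ) + 2 * s * c) ≠ 0 := by positivity
  have hxpz : x + z - 1 = (1 + (d:ℝ) * (2 * s * c)) / ((d : ℝ) * ((d : ℝ) + 2 * s * c)) := by
    rw [hx, hz, h2]
    rw [← add_div, div_sub_one hDne, div_left_inj' hDne]
    linear_combination ((d:ℝ)^2 + 1) * hpyth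
  have hxmz : x - z = ((d:ℝ)^2 - 1) * (c ^ 2 - s ^ 2) / ((d : ℝ) * ((d : ℝ) + 2 * s * c)) := by
    rw [hx, hz, h2]
    field_simp
    ring
  rw [hxpz, hxmz, hm]
  generalize hv : c ^ 2 - s ^ 2 = v at hq hxmz
  generalize hu : 2 * s * c = u at hq hDne hxpz
  have hdne : (d : ℝ) ≠ 0 := by linarith
  have hDune : (d : ℝ) + u ≠ 0 := by
    intro h
    exact absurd (by rw [h, mul_zero]) hDne
  field_simp
  linear_combination ((d:ℝ)^2 * ((d:ℝ)^2 - 1)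
    + ((d:ℝ)^2 - (d:ℝ)^4 + (d:ℝ)^6 - 2*(d:ℝ)^8 + (d:ℝ)^10
      + (d:ℝ)^4 * ((d:ℝ)^2 - 1)^2 * u^2 + 2*(d:ℝ)^5 * ((d:ℝ)^2 - 1)^2 * u)
    + ((d:ℝ)^2 - (d:ℝ)^4*u^2 - 2*(d:ℝ)^5*u + 2*(d:ℝ)^6*u^2 - (d:ℝ)^6 + 4*(d:ℝ)^7*u
      - (d:ℝ)^8*u^2 + 2*(d:ℝ)^8 - 2*(d:ℝ)^9*u - (d:ℝ)^10 - 1)) * hq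
end

section
/- Let X and Y be finite sets with |X| = m, and let P be a probability mass function on X × Y whose Y-marginal P_Y is strictly positive. Define the quadratically-weighted guessing probability P_quad(X|Y) = ∑_y ( ∑_x P(x,y)³ ) / ( ∑_x P(x,y)² ) (summing over y with ∑_x P(x,y)² > 0). Then D_3(P, π_X ⊗ P_Y) ≤ (1/2) · log( m² · P_quad(X|Y) ), where D_3 is the Rényi divergence of order 3 and π_X ⊗ P_Y is the distribution (x,y) ↦ P_Y(y)/m. -/
/-- **Rényi-3 divergence and the quadratically-weighted guessing probability.**
For a joint pmf `P` on `X × Y` with `|X| = m` and strictly positive `Y`-marginal `P_Y`,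
`D_3(P, π_X ⊗ P_Y) ≤ (1/2) log (m² · P_quad(X|Y))`, where
`D_3(P,Q) = (1/2) log ∑ P(z)³/Q(z)²` and
`P_quad(X|Y) = ∑_y (∑_x P(x,y)³)/(∑_x P(x,y)²)` (over `y` with `∑_x P(x,y)² > 0`). -/
theorem renyi_three_le_log_quad {X Y : Type*} [Fintype X] [Fintype Y] (m : ℕ)
    (hm : Fintype.card X = m)
    (P : X × Y → ℝ) (hP0 : ∀ z, 0 ≤ P z) (hP1 : ∑ z, P z = 1)
    (hPY : ∀ y, 0 < ∑ x, P (x, y)) :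
    (1 / 2) * Real.log (∑ z : X × Y, P z ^ 3 / ((∑ x, P (x, z.2)) / m) ^ 2) ≤
      (1 / 2) * Real.log ((m : ℝ) ^ 2 *
        ∑ y, if 0 < ∑ x, P (x, y) ^ 2 then
          (∑ x, P (x, y) ^ 3) / (∑ x, P (x, y) ^ 2) else 0) := by
  classical
  have hYne : Nonempty Y := by
    by_contra h
    rw [not_nonempty_iff] at h
    simp at hP1
  have hXne : Nonempty X := by
    by_contra h
    rw [not_nonempty_iff] at h
    have := hPY (Classical.arbitrary Y)
    simp at this
  have hm0 : (0 : ℝ) < m := by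
    have : 0 < Fintype.card X := Fintype.card_pos
    rw [hm] at this
    exact_mod_cast this
  -- existence of a positive P z
  obtain ⟨z0, hz0⟩ : ∃ z, 0 < P z := by
    by_contra h
    push_neg at h
    have : ∑ z : X × Y, P z = 0 :=
      Finset.sum_eq_zero fun z _ => le_antisymm (h z) (hP0 z)
    rw [this] at hP1; norm_num at hP1
  have hterm_nonneg : ∀ z : X × Y, 0 ≤ P z ^ 3 / ((∑ x, P (x, z.2)) / m) ^ 2 := by
    intro z
    have := hP0 z
    positivity
  have hpos : 0 < ∑ z : X × Y, P z ^ 3 / ((∑ x, P (x, z.2)) / m) ^ 2 := by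
    apply Finset.sum_pos' (fun z _ => hterm_nonneg z)
    refine ⟨z0, Finset.mem_univ _, ?_⟩
    have hS := hPY z0.2
    positivity
  -- key sum inequality
  have hB2 : ∀ y, 0 < ∑ x, P (x, y) ^ 2 := by
    intro y
    obtain ⟨x0, hx0⟩ : ∃ x, 0 < P (x, y) := by
      by_contra h
      push_neg at h
      have : ∑ x, P (x, y) = 0 :=
        Finset.sum_eq_zero fun x _ => le_antisymm (h x) (hP0 _)
      exact absurd this (ne_of_gt (hPY y))
    apply Finset.sum_pos' (fun x _ => sq_nonneg _)
    exact ⟨x0, Finset.mem_univ _, by positivity⟩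
  have hBS : ∀ y, (∑ x, P (x, y) ^ 2) ≤ (∑ x, P (x, y)) ^ 2 := by
    intro y
    rw [sq, Finset.sum_mul_sum]
    calc ∑ x, P (x, y) ^ 2 ≤ ∑ x, ∑ x', P (x, y) * P (x', y) := by
          apply Finset.sum_le_sum
          intro x _
          rw [sq]
          calc P (x, y) * P (x, y)
              ≤ P (x, y) * P (x, y) + ∑ x' ∈ Finset.univ.erase x, P (x, y) * P (x', y) := by
                have : 0 ≤ ∑ x' ∈ Finset.univ.erase x, P (x, y) * P (x', y) :=
                  Finset.sum_nonneg fun x' _ => mul_nonneg (hP0 _) (hP0 _)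
                linarith
            _ = ∑ x', P (x, y) * P (x', y) := by
                rw [← Finset.add_sum_erase _ _ (Finset.mem_univ x)]
      _ = ∑ x, ∑ x', P (x, y) * P (x', y) := rfl
  have hsum : (∑ z : X × Y, P z ^ 3 / ((∑ x, P (x, z.2)) / m) ^ 2) ≤
      (m : ℝ) ^ 2 * ∑ y, if 0 < ∑ x, P (x, y) ^ 2 then
        (∑ x, P (x, y) ^ 3) / (∑ x, P (x, y) ^ 2) else 0 := by
    rw [Fintype.sum_prod_type_right, Finset.mul_sum]
    apply Finset.sum_le_sum
    intro y _
    rw [if_pos (hB2 y)]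
    have hS := hPY y
    have hA : 0 ≤ ∑ x, P (x, y) ^ 3 := Finset.sum_nonneg fun x _ => by
      have := hP0 (x, y); positivity
    have h1 : ∑ x, P (x, y) ^ 3 / ((∑ x', P (x', y)) / m) ^ 2
        = (m : ℝ) ^ 2 * (∑ x, P (x, y) ^ 3) / (∑ x', P (x', y)) ^ 2 := by
      rw [← Finset.sum_div, div_pow, div_div_eq_mul_div, mul_comm]
    rw [h1, mul_div_assoc']
    exact div_le_div_of_nonneg_left (by positivity) (hB2 y) (hBS y)
  have := Real.log_le_log hpos hsum
  linarith
end

section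
/- Let X and Y be finite sets with |X| = m ≥ 2, and let P be a probability mass function on X × Y whose Y-marginal P_Y is strictly positive. Let P_opt(X|Y) = ∑_y max_x P(x,y) and P_quad(X|Y) = ∑_y ( ∑_x P(x,y)³ ) / ( ∑_x P(x,y)² ) (summing over y with ∑_x P(x,y)² > 0). Then P_quad(X|Y) ≥ P_opt(X|Y)³ + (1 − P_opt(X|Y))³ / (m − 1)². -/
open Finset

private lemma radon2 (a b c d : ℝ) (ha : 0 ≤ a) (hc : 0 ≤ c) (hb : 0 < b) (hd : 0 < d) :
    (a + c) ^ 3 / (b + d) ^ 2 ≤ a ^ 3 / b ^ 2 + c ^ 3 / d ^ 2 := by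
  rw [div_add_div _ _ (by positivity) (by positivity),
    div_le_div_iff₀ (by positivity) (by positivity)]
  nlinarith [mul_nonneg (sq_nonneg (a * d - b * c))
    (by positivity : (0:ℝ) ≤ c * b ^ 2 + a * d ^ 2 + 2 * b * d * (a + c))]

private lemma radon3 {ι : Type*} (s : Finset ι) (a b : ι → ℝ)
    (ha : ∀ i ∈ s, 0 ≤ a i) (hb : ∀ i ∈ s, 0 < b i) :
    (∑ i ∈ s, a i) ^ 3 / (∑ i ∈ s, b i) ^ 2 ≤ ∑ i ∈ s, a i ^ 3 / b i ^ 2 := by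
  induction s using Finset.cons_induction with
  | empty => simp
  | cons j s hj ih =>
    rw [Finset.sum_cons, Finset.sum_cons, Finset.sum_cons]
    rcases s.eq_empty_or_nonempty with rfl | hs
    · simp
    · have hA : 0 ≤ ∑ i ∈ s, a i :=
        Finset.sum_nonneg fun i hi => ha i (Finset.mem_cons_of_mem hi)
      have hB : 0 < ∑ i ∈ s, b i :=
        Finset.sum_pos (fun i hi => hb i (Finset.mem_cons_of_mem hi)) hs
      calc (a j + ∑ i ∈ s, a i) ^ 3 / (b j + ∑ i ∈ s, b i) ^ 2
          ≤ a j ^ 3 / b j ^ 2 + (∑ i ∈ s, a i) ^ 3 / (∑ i ∈ s, b i) ^ 2 :=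
            radon2 _ _ _ _ (ha j (Finset.mem_cons_self _ _)) hA
              (hb j (Finset.mem_cons_self _ _)) hB
        _ ≤ _ := add_le_add_right
            (ih (fun i hi => ha i (Finset.mem_cons_of_mem hi))
              (fun i hi => hb i (Finset.mem_cons_of_mem hi))) _

private lemma sumsq_pos {X : Type*} [Fintype X] (a : X → ℝ) (ha : ∀ x, 0 ≤ a x)
    (hq : 0 < ∑ x, a x) : 0 < ∑ x, a x ^ 2 := by
  obtain ⟨x1, -, hx1⟩ := Finset.exists_lt_of_sum_lt (by simpa using hq :
    ∑ x : X, (0:ℝ) < ∑ x : X, a x)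
  exact Finset.sum_pos' (fun x _ => sq_nonneg _) ⟨x1, Finset.mem_univ _, by positivity⟩

private lemma chain (p q S2 S3 M : ℝ) (hp0 : 0 ≤ p) (hpq : p ≤ q) (hq : 0 < q)
    (hS2 : 0 < S2) (hM : 1 ≤ M) (hCS : S2 ^ 2 ≤ S3 * q)
    (herase : (q - p) ^ 2 ≤ M * (S2 - p ^ 2)) :
    p ^ 3 / q ^ 2 + (q - p) ^ 3 / (M ^ 2 * q ^ 2) ≤ S3 / S2 := by
  have hM0 : 0 < M := by linarith
  have step1 : S2 / q ≤ S3 / S2 := by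
    rw [div_le_div_iff₀ hq hS2]; nlinarith [hCS]
  have e2 : p ^ 2 + (q - p) ^ 2 / M ≤ S2 := by
    have : (q - p) ^ 2 / M ≤ S2 - p ^ 2 := by
      rw [div_le_iff₀ hM0]; nlinarith [herase]
    linarith
  have step2 : p ^ 2 / q + (q - p) ^ 2 / (M * q) ≤ S2 / q := by
    have hrw : p ^ 2 / q + (q - p) ^ 2 / (M * q) = (p ^ 2 + (q - p) ^ 2 / M) / q := by
      field_simp
    rw [hrw]
    exact div_le_div_of_nonneg_right e2 hq.le
  have step3 : p ^ 3 / q ^ 2 ≤ p ^ 2 / q := by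
    rw [div_le_div_iff₀ (by positivity) hq]
    nlinarith [mul_nonneg (mul_nonneg (sq_nonneg p) hq.le) (sub_nonneg.2 hpq)]
  have step4 : (q - p) ^ 3 / (M ^ 2 * q ^ 2) ≤ (q - p) ^ 2 / (M * q) := by
    have hr0 : 0 ≤ q - p := sub_nonneg.2 hpq
    have hMq : q - p ≤ M * q := by nlinarith [mul_nonneg (by linarith : (0:ℝ) ≤ M - 1) hq.le]
    rw [div_le_div_iff₀ (by positivity) (by positivity)]
    nlinarith [mul_nonneg (mul_nonneg (sq_nonneg (q - p))
      (by positivity : (0:ℝ) ≤ M * q)) (sub_nonneg.2 hMq)]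
  calc p ^ 3 / q ^ 2 + (q - p) ^ 3 / (M ^ 2 * q ^ 2)
      ≤ p ^ 2 / q + (q - p) ^ 2 / (M * q) := add_le_add step3 step4
    _ ≤ S2 / q := step2
    _ ≤ S3 / S2 := step1

private lemma per_y {X : Type*} [Fintype X] (m : ℕ) (hm : Fintype.card X = m) (hm2 : 2 ≤ m)
    (a : X → ℝ) (ha : ∀ x, 0 ≤ a x) (hq : 0 < ∑ x, a x)
    (x0 : X) (hx0 : ∀ x, a x ≤ a x0) :
    a x0 ^ 3 / (∑ x, a x) ^ 2 +
      (∑ x, a x - a x0) ^ 3 / (((m : ℝ) - 1) ^ 2 * (∑ x, a x) ^ 2)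
      ≤ (∑ x, a x ^ 3) / (∑ x, a x ^ 2) := by
  classical
  have hm2' : (2:ℝ) ≤ (m : ℝ) := by exact_mod_cast hm2
  have hS2pos : 0 < ∑ x, a x ^ 2 := sumsq_pos a ha hq
  -- Cauchy-Schwarz : S2^2 ≤ S3 * q
  have h1 : ∀ x : X, Real.sqrt (a x) * a x * Real.sqrt (a x) = a x ^ 2 := fun x => by
    rw [mul_comm, ← mul_assoc, Real.mul_self_sqrt (ha x)]; ring
  have h2 : ∀ x : X, (Real.sqrt (a x) * a x) ^ 2 = a x ^ 3 := fun x => by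
    rw [mul_pow, Real.sq_sqrt (ha x)]; ring
  have h3 : ∀ x : X, Real.sqrt (a x) ^ 2 = a x := fun x => Real.sq_sqrt (ha x)
  have hCS := Finset.sum_mul_sq_le_sq_mul_sq Finset.univ
    (fun x => Real.sqrt (a x) * a x) (fun x => Real.sqrt (a x))
  simp only [h1, h2, h3] at hCS
  -- erase bound
  have hcard : ((Finset.univ.erase x0).card : ℝ) = (m : ℝ) - 1 := by
    rw [Finset.card_erase_of_mem (Finset.mem_univ _), Finset.card_univ, hm]
    have : 1 ≤ m := by omega
    push_cast [Nat.cast_sub this]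
    ring
  have hsum_erase : ∑ x ∈ Finset.univ.erase x0, a x = (∑ x, a x) - a x0 := by
    rw [Finset.sum_erase_eq_sub (Finset.mem_univ x0)]
  have hsq_erase : ∑ x ∈ Finset.univ.erase x0, a x ^ 2 = (∑ x, a x ^ 2) - a x0 ^ 2 := by
    rw [Finset.sum_erase_eq_sub (Finset.mem_univ x0)]
  have herase := sq_sum_le_card_mul_sum_sq (s := Finset.univ.erase x0) (f := a)
  rw [hsum_erase, hsq_erase, hcard] at herase
  exact chain (a x0) (∑ x, a x) (∑ x, a x ^ 2) (∑ x, a x ^ 3) ((m : ℝ) - 1)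
    (ha x0) (Finset.single_le_sum (fun x _ => ha x) (Finset.mem_univ x0)) hq hS2pos
    (by linarith) (by nlinarith [hCS]) herase

/-- **Quadratically-weighted vs optimal guessing.**
For a joint pmf `P` on `X × Y` with `|X| = m ≥ 2` and strictly positive `Y`-marginal,
the quadratically-weighted guessing probability
`P_quad = ∑_y (∑_x P(x,y)³)/(∑_x P(x,y)²)` (over `y` with `∑_x P(x,y)² > 0`)
satisfies `P_quad ≥ P_opt³ + (1-P_opt)³/(m-1)²` where `P_opt = ∑_y max_x P(x,y)`. -/
theorem quad_weighted_vs_optimal {X Y : Type*} [Fintype X] [Fintype Y] (m : ℕ)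
    (hm : Fintype.card X = m) (hm2 : 2 ≤ m)
    (P : X × Y → ℝ) (hP0 : ∀ z, 0 ≤ P z) (hP1 : ∑ z, P z = 1)
    (hPY : ∀ y, 0 < ∑ x, P (x, y))
    (Popt Pquad : ℝ)
    (hPopt : Popt = ∑ y, ⨆ x, P (x, y))
    (hPquad : Pquad = ∑ y, if 0 < ∑ x, P (x, y) ^ 2 then
        (∑ x, P (x, y) ^ 3) / (∑ x, P (x, y) ^ 2) else 0) :
    Pquad ≥ Popt ^ 3 + (1 - Popt) ^ 3 / ((m : ℝ) - 1) ^ 2 := by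
  classical
  have hX : Nonempty X := Fintype.card_pos_iff.mp (by omega)
  have hM : (0:ℝ) < (m : ℝ) - 1 := by
    have : (2:ℝ) ≤ (m : ℝ) := by exact_mod_cast hm2
    linarith
  choose x0 hx0 using fun y : Y => Finite.exists_max (fun x : X => P (x, y))
  have hsup : ∀ y, (⨆ x, P (x, y)) = P (x0 y, y) := fun y =>
    le_antisymm (ciSup_le (hx0 y)) (le_ciSup (Finite.bddAbove_range (fun x : X => P (x, y))) (x0 y))
  have hq1 : ∑ y, ∑ x, P (x, y) = 1 := by
    rw [← Fintype.sum_prod_type_right]; exact hP1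
  have hS2pos : ∀ y, 0 < ∑ x, P (x, y) ^ 2 := fun y =>
    sumsq_pos (fun x => P (x, y)) (fun x => hP0 _) (hPY y)
  have hpq : ∀ y, P (x0 y, y) ≤ ∑ x, P (x, y) := fun y =>
    Finset.single_le_sum (fun x _ => hP0 (x, y)) (Finset.mem_univ (x0 y))
  have key : ∀ y : Y,
      P (x0 y, y) ^ 3 / (∑ x, P (x, y)) ^ 2 +
        (∑ x, P (x, y) - P (x0 y, y)) ^ 3 / (((m : ℝ) - 1) ^ 2 * (∑ x, P (x, y)) ^ 2)
        ≤ (∑ x, P (x, y) ^ 3) / (∑ x, P (x, y) ^ 2) := fun y =>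
    per_y m hm hm2 (fun x => P (x, y)) (fun x => hP0 _) (hPY y) (x0 y) (hx0 y)
  have hPopt' : Popt = ∑ y, P (x0 y, y) := by
    rw [hPopt]; exact Finset.sum_congr rfl fun y _ => hsup y
  -- Radon bounds
  have hr1 : Popt ^ 3 ≤ ∑ y, P (x0 y, y) ^ 3 / (∑ x, P (x, y)) ^ 2 := by
    have := radon3 Finset.univ (fun y => P (x0 y, y)) (fun y => ∑ x, P (x, y))
      (fun y _ => hP0 _) (fun y _ => hPY y)
    rw [hq1] at this
    simpa [hPopt'] using this
  have hr2 : (1 - Popt) ^ 3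
      ≤ ∑ y, (∑ x, P (x, y) - P (x0 y, y)) ^ 3 / (∑ x, P (x, y)) ^ 2 := by
    have := radon3 Finset.univ (fun y => ∑ x, P (x, y) - P (x0 y, y))
      (fun y => ∑ x, P (x, y)) (fun y _ => sub_nonneg.2 (hpq y)) (fun y _ => hPY y)
    rw [Finset.sum_sub_distrib, hq1, ← hPopt'] at this
    simpa using this
  have hsplit : ∑ y, (∑ x, P (x, y) - P (x0 y, y)) ^ 3 / (((m : ℝ) - 1) ^ 2 * (∑ x, P (x, y)) ^ 2)
      = (∑ y, (∑ x, P (x, y) - P (x0 y, y)) ^ 3 / (∑ x, P (x, y)) ^ 2) / ((m : ℝ) - 1) ^ 2 := by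
    rw [Finset.sum_div]
    exact Finset.sum_congr rfl fun y _ => by
      rw [div_div]; ring_nf
  have hQ : Pquad = ∑ y, (∑ x, P (x, y) ^ 3) / (∑ x, P (x, y) ^ 2) := by
    rw [hPquad]
    exact Finset.sum_congr rfl fun y _ => if_pos (hS2pos y)
  rw [ge_iff_le, hQ]
  calc Popt ^ 3 + (1 - Popt) ^ 3 / ((m : ℝ) - 1) ^ 2
      ≤ (∑ y, P (x0 y, y) ^ 3 / (∑ x, P (x, y)) ^ 2) +
        (∑ y, (∑ x, P (x, y) - P (x0 y, y)) ^ 3 / (∑ x, P (x, y)) ^ 2) / ((m : ℝ) - 1) ^ 2 := by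
        exact add_le_add hr1 (div_le_div_of_nonneg_right hr2 (by positivity))
    _ = ∑ y, (P (x0 y, y) ^ 3 / (∑ x, P (x, y)) ^ 2 +
        (∑ x, P (x, y) - P (x0 y, y)) ^ 3 / (((m : ℝ) - 1) ^ 2 * (∑ x, P (x, y)) ^ 2)) := by
        rw [Finset.sum_add_distrib, hsplit]
    _ ≤ ∑ y, (∑ x, P (x, y) ^ 3) / (∑ x, P (x, y) ^ 2) := Finset.sum_le_sum fun y _ => key y
end

section
/- Let X be a finite set with |X| = m ≥ 2, let p be a probability mass function on X, and for each x ∈ X let φ_x be an n × n positive semidefinite complex matrix with trace 1. Assume φ = ∑_x p(x)·φ_x is positive definite, and let φ^{−1/2} denote the inverse of its positive semidefinite square root. Define the optimal guessing probability P_opt = sup over all POVMs {Λ_x}_{x∈X} (families of positive semidefinite n × n matrices with ∑_x Λ_x = I) of ∑_x p(x)·Tr[φ_x Λ_x], and the pretty good measurement guessing probability P_pg = ∑_x p(x)²·Tr[ φ^{−1/2} φ_x φ^{−1/2} φ_x ]. Then P_pg ≥ P_opt² + (1 − P_opt)² / (m − 1). -/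
open ComplexOrder

namespace Matrix.PosSemidef

variable {d : Type*} [Fintype d] [DecidableEq d]

noncomputable def sqrt {A : Matrix d d ℂ} (hA : A.PosSemidef) : Matrix d d ℂ :=
  hA.1.eigenvectorUnitary.1 *
    Matrix.diagonal ((fun r : ℝ => (r : ℂ)) ∘ (Real.sqrt ∘ hA.1.eigenvalues)) *
    (star hA.1.eigenvectorUnitary : Matrix d d ℂ)

lemma posSemidef_sqrt {A : Matrix d d ℂ} (hA : A.PosSemidef) : hA.sqrt.PosSemidef := by
  unfold sqrt
  have e : (star hA.1.eigenvectorUnitary : Matrix d d ℂ)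
      = (hA.1.eigenvectorUnitary : Matrix d d ℂ)ᴴ := rfl
  rw [e]
  refine Matrix.PosSemidef.mul_mul_conjTranspose_same ?_ _
  refine Matrix.posSemidef_diagonal_iff.mpr fun i => ?_
  simp [Complex.zero_le_real, Real.sqrt_nonneg]

lemma sqrt_mul_self {A : Matrix d d ℂ} (hA : A.PosSemidef) : hA.sqrt * hA.sqrt = A := by
  set U : Matrix d d ℂ := hA.1.eigenvectorUnitary.1 with hUdef
  set D : Matrix d d ℂ :=
    Matrix.diagonal ((fun r : ℝ => (r : ℂ)) ∘ (Real.sqrt ∘ hA.1.eigenvalues)) with hDdef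
  have hD : D * D = Matrix.diagonal (RCLike.ofReal ∘ hA.1.eigenvalues) := by
    rw [hDdef, Matrix.diagonal_mul_diagonal]
    congr 1
    funext i
    simp only [Function.comp_apply]
    rw [← Complex.ofReal_mul, Real.mul_self_sqrt (hA.eigenvalues_nonneg i)]
    rfl
  have hU : (star hA.1.eigenvectorUnitary : Matrix d d ℂ) * U = 1 :=
    Unitary.coe_star_mul_self _
  conv_rhs => rw [hA.1.spectral_theorem, Unitary.conjStarAlgAut_apply]
  show U * D * (star hA.1.eigenvectorUnitary : Matrix d d ℂ) *
      (U * D * (star hA.1.eigenvectorUnitary : Matrix d d ℂ)) = _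
  rw [← hD]
  calc U * D * (star hA.1.eigenvectorUnitary : Matrix d d ℂ) *
      (U * D * (star hA.1.eigenvectorUnitary : Matrix d d ℂ))
      = U * D * ((star hA.1.eigenvectorUnitary : Matrix d d ℂ) * U) * D *
        (star hA.1.eigenvectorUnitary : Matrix d d ℂ) := by simp only [Matrix.mul_assoc]
    _ = _ := by rw [hU, Matrix.mul_one]; simp only [Matrix.mul_assoc]; rfl

end Matrix.PosSemidef

namespace PGMAux

open Matrix

variable {d : Type*} [Fintype d] [DecidableEq d]

lemma trace_nonneg' {A : Matrix d d ℂ} (hA : A.PosSemidef) : 0 ≤ A.trace := by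
  have h : ∀ i, 0 ≤ A i i := by
    intro i
    have := hA.dotProduct_mulVec_nonneg (Pi.single i 1)
    simpa [dotProduct, Matrix.mulVec, Pi.single_apply, Finset.sum_ite_eq] using this
  exact Finset.sum_nonneg fun i _ => h i

lemma trace_re_nonneg' {A : Matrix d d ℂ} (hA : A.PosSemidef) : 0 ≤ A.trace.re :=
  (Complex.le_def.mp (trace_nonneg' hA)).1

lemma trace_mul_re_nonneg' {A B : Matrix d d ℂ} (hA : A.PosSemidef) (hB : B.PosSemidef) :
    0 ≤ ((A * B).trace).re := by
  have h1 : (A * B).trace = (hA.sqrtᴴ * B * hA.sqrt).trace := by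
    rw [hA.posSemidef_sqrt.isHermitian.eq]
    conv_rhs => rw [Matrix.trace_mul_comm, ← Matrix.mul_assoc, hA.sqrt_mul_self]
  rw [h1]
  exact trace_re_nonneg' (hB.conjTranspose_mul_mul_same _)

lemma amgm' (X Y : Matrix d d ℂ) {l : ℝ} (hl : 0 < l) :
    2 * ((Xᴴ * Y).trace).re ≤ l * ((Xᴴ * X).trace).re + l⁻¹ * ((Yᴴ * Y).trace).re := by
  set c : ℝ := Real.sqrt l with hc
  have hc0 : 0 < c := Real.sqrt_pos.mpr hl
  have hc2 : c * c = l := Real.mul_self_sqrt hl.le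
  set Z : Matrix d d ℂ := (c : ℂ) • X - ((c⁻¹ : ℝ) : ℂ) • Y with hZ
  have h0 : 0 ≤ ((Zᴴ * Z).trace).re := trace_re_nonneg' (posSemidef_conjTranspose_mul_self Z)
  have hexp : (Zᴴ * Z).trace = (l : ℂ) * (Xᴴ * X).trace - (c * c⁻¹ : ℝ) * (Xᴴ * Y).trace
      - (c * c⁻¹ : ℝ) * (Yᴴ * X).trace + ((l⁻¹ : ℝ) : ℂ) * (Yᴴ * Y).trace := by
    rw [hZ]
    simp only [conjTranspose_sub, conjTranspose_smul, Matrix.sub_mul, Matrix.mul_sub,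
      Matrix.smul_mul, Matrix.mul_smul, trace_sub, trace_smul, smul_smul, smul_eq_mul,
      Complex.star_def, Complex.conj_ofReal]
    push_cast
    rw [← hc2]
    push_cast
    ring
  have hsym : ((Yᴴ * X).trace).re = ((Xᴴ * Y).trace).re := by
    have : (Yᴴ * X) = (Xᴴ * Y)ᴴ := by simp [Matrix.conjTranspose_mul]
    rw [this, Matrix.trace_conjTranspose]
    simp
  have hcc : c * c⁻¹ = 1 := mul_inv_cancel₀ hc0.ne'
  rw [hexp] at h0
  simp only [Complex.add_re, Complex.sub_re, Complex.mul_re, Complex.ofReal_re,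
    Complex.ofReal_im, hcc] at h0
  nlinarith [h0, hsym]

lemma sqrt_posDef {A : Matrix d d ℂ} (hA : A.PosDef) : (hA.posSemidef.sqrt).PosDef := by
  refine hA.posSemidef.posSemidef_sqrt.posDef_iff_isUnit.mpr ?_
  have h := hA.isUnit
  rw [← hA.posSemidef.sqrt_mul_self] at h
  exact isUnit_of_mul_isUnit_left h

omit [DecidableEq d] in
lemma sum_posSemidef {ι : Type*} (s : Finset ι) (f : ι → Matrix d d ℂ)
    (h : ∀ i ∈ s, (f i).PosSemidef) : (∑ i ∈ s, f i).PosSemidef := by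
  classical
  induction s using Finset.induction_on with
  | empty => simpa using Matrix.PosSemidef.zero
  | insert _ _ hni ih =>
    rename_i a t
    rw [Finset.sum_insert hni]
    exact (h a (Finset.mem_insert_self a t)).add
      (ih fun i hi => h i (Finset.mem_insert_of_mem hi))

omit [DecidableEq d] in
lemma smul_posSemidef {A : Matrix d d ℂ} (hA : A.PosSemidef) {c : ℝ} (hc : 0 ≤ c) :
    ((c : ℂ) • A).PosSemidef := by
  refine posSemidef_iff_dotProduct_mulVec.mpr ⟨?_, fun x => ?_⟩
  · unfold Matrix.IsHermitian
    rw [Matrix.conjTranspose_smul, hA.isHermitian.eq]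
    simp [Complex.star_def, Complex.conj_ofReal]
  · have := hA.dotProduct_mulVec_nonneg x
    rw [Matrix.smul_mulVec, dotProduct_smul]
    exact smul_nonneg (by exact_mod_cast Complex.zero_le_real.mpr hc) this

lemma six {σ Λ : Matrix d d ℂ} (hσ : σ.PosSemidef) (hΛ : Λ.PosSemidef)
    (h1 : (1 - Λ).PosSemidef) : ((σ * Λ * σ * Λ).trace).re ≤ ((σ * σ * Λ).trace).re := by
  set W := hσ.sqrt with hW
  have hWW : W * W = σ := hσ.sqrt_mul_self
  have hWH : Wᴴ = W := hσ.posSemidef_sqrt.isHermitian.eq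
  have hG : (W * Λ * W).PosSemidef := by
    have := hΛ.conjTranspose_mul_mul_same W; rwa [hWH] at this
  have hD : (σ - W * Λ * W).PosSemidef := by
    have := h1.conjTranspose_mul_mul_same W
    rw [hWH] at this
    have e : W * (1 - Λ) * W = σ - W * Λ * W := by
      rw [Matrix.mul_sub, Matrix.mul_one, Matrix.sub_mul, hWW]
    rwa [e] at this
  have key : 0 ≤ (((W * Λ * W) * (σ - W * Λ * W)).trace).re := trace_mul_re_nonneg' hG hD
  have eA : ((W * Λ * W) * σ).trace = (σ * σ * Λ).trace := by
    have e1 : (W * Λ * W) * σ = W * (Λ * (W * (W * W))) := by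
      rw [← hWW]; simp only [Matrix.mul_assoc]
    rw [e1, Matrix.trace_mul_comm]
    have e2 : (Λ * (W * (W * W))) * W = Λ * ((W * W) * (W * W)) := by
      simp only [Matrix.mul_assoc]
    rw [e2, hWW, Matrix.trace_mul_comm]
  have eB : ((W * Λ * W) * (W * Λ * W)).trace = (σ * Λ * σ * Λ).trace := by
    have e1 : (W * Λ * W) * (W * Λ * W) = W * (Λ * ((W * W) * (Λ * W))) := by
      simp only [Matrix.mul_assoc]
    rw [e1, hWW, Matrix.trace_mul_comm]
    have e2 : (Λ * (σ * (Λ * W))) * W = Λ * (σ * (Λ * (W * W))) := by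
      simp only [Matrix.mul_assoc]
    rw [e2, hWW, Matrix.trace_mul_comm]
    have e3 : (σ * (Λ * σ)) * Λ = σ * Λ * σ * Λ := by simp only [Matrix.mul_assoc]
    rw [e3]
  rw [Matrix.mul_sub, Matrix.trace_sub, eA, eB, Complex.sub_re] at key
  linarith

omit [DecidableEq d] in
lemma tr_TT {T R : Matrix d d ℂ} (hTT : T * T = R) (A B : Matrix d d ℂ) :
    ((T * A * T) * (T * B * T)).trace = (R * A * R * B).trace := by
  have e1 : (T * A * T) * (T * B * T) = T * (A * ((T * T) * (B * T))) := by
    simp only [Matrix.mul_assoc]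
  rw [e1, hTT, Matrix.trace_mul_comm]
  have e2 : (A * (R * (B * T))) * T = A * (R * (B * (T * T))) := by
    simp only [Matrix.mul_assoc]
  rw [e2, hTT, Matrix.trace_mul_comm]
  have e3 : (R * (B * R)) * A = (R * B) * (R * A) := by simp only [Matrix.mul_assoc]
  rw [e3, Matrix.trace_mul_comm]
  have e4 : (R * A) * (R * B) = R * A * R * B := by simp only [Matrix.mul_assoc]
  rw [e4]

omit [DecidableEq d] in
lemma herm_conj {T A : Matrix d d ℂ} (hT : Tᴴ = T) (hA : Aᴴ = A) :
    (T * A * T)ᴴ = T * A * T := by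
  simp only [Matrix.conjTranspose_mul, hT, hA, Matrix.mul_assoc]

lemma amgm_herm {Xm Ym : Matrix d d ℂ} (hX : Xmᴴ = Xm) (hY : Ymᴴ = Ym) {l : ℝ} (hl : 0 < l) :
    2 * ((Xm * Ym).trace).re ≤ l * ((Xm * Xm).trace).re + l⁻¹ * ((Ym * Ym).trace).re := by
  have := amgm' Xm Ym hl
  rwa [hX, hY] at this

lemma re_ofReal_mul' (a : ℝ) (z : ℂ) : ((a : ℂ) * z).re = a * z.re := by
  simp [Complex.mul_re]

end PGMAux

open Matrix

set_option maxHeartbeats 1000000 in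
/-- **Pretty good vs optimal measurement (quantum).**
For an ensemble `{p x, φ x}` of `n × n` density matrices indexed by a finite set `X`
with `|X| = m ≥ 2`, whose average state `φ = ∑ x, p x • φ x` is positive definite,
the pretty good measurement guessing probability
`P_pg = ∑ x, (p x)² Tr[φ^{-1/2} φ_x φ^{-1/2} φ_x]` and the optimal guessing probability
`P_opt = sup over POVMs {Λ x} of ∑ x, p x · Tr[φ_x Λ_x]` satisfy
`P_pg ≥ P_opt² + (1 - P_opt)²/(m - 1)`. -/
theorem pretty_good_vs_optimal_quantum {X : Type*} [Fintype X] (m n : ℕ)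
    (hm : Fintype.card X = m) (hm2 : 2 ≤ m)
    (p : X → ℝ) (hp0 : ∀ x, 0 ≤ p x) (hp1 : ∑ x, p x = 1)
    (φ : X → Matrix (Fin n) (Fin n) ℂ)
    (hφ : ∀ x, (φ x).PosSemidef) (hφtr : ∀ x, (φ x).trace = 1)
    (hmix : (∑ x, (p x : ℂ) • φ x).PosDef)
    (Popt : ℝ)
    (hPopt : Popt = sSup {r : ℝ | ∃ Λ : X → Matrix (Fin n) (Fin n) ℂ,
        (∀ x, (Λ x).PosSemidef) ∧ (∑ x, Λ x = 1) ∧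
          r = ∑ x, p x * ((φ x * Λ x).trace).re})
    (Ppg : ℝ)
    (hPpg : Ppg = ∑ x, p x ^ 2 *
        (((hmix.posSemidef.1.eigenvectorUnitary.1 *
            Matrix.diagonal ((fun r : ℝ => (r : ℂ)) ∘ (Real.sqrt ∘ hmix.posSemidef.1.eigenvalues)) *
            (star hmix.posSemidef.1.eigenvectorUnitary : Matrix (Fin n) (Fin n) ℂ))⁻¹ * φ x *
          (hmix.posSemidef.1.eigenvectorUnitary.1 *
            Matrix.diagonal ((fun r : ℝ => (r : ℂ)) ∘ (Real.sqrt ∘ hmix.posSemidef.1.eigenvalues)) *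
            (star hmix.posSemidef.1.eigenvectorUnitary : Matrix (Fin n) (Fin n) ℂ))⁻¹ * φ x).trace).re) :
    Ppg ≥ Popt ^ 2 + (1 - Popt) ^ 2 / ((m : ℝ) - 1) := by
  classical
  have hXne : Nonempty X := Fintype.card_pos_iff.mp (by omega)
  have hm1R : (1 : ℝ) < (m : ℝ) := by exact_mod_cast hm2.trans_lt' (by norm_num)
  have hm0R : (0 : ℝ) < (m : ℝ) := by linarith
  set Φ : Matrix (Fin n) (Fin n) ℂ := ∑ x, (p x : ℂ) • φ x with hΦdef
  set σ : Matrix (Fin n) (Fin n) ℂ := hmix.posSemidef.1.eigenvectorUnitary.1 *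
            Matrix.diagonal ((fun r : ℝ => (r : ℂ)) ∘ (Real.sqrt ∘ hmix.posSemidef.1.eigenvalues)) *
            (star hmix.posSemidef.1.eigenvectorUnitary : Matrix (Fin n) (Fin n) ℂ) with hσdef
  set R : Matrix (Fin n) (Fin n) ℂ := σ⁻¹ with hRdef
  have hσpsd : σ.PosSemidef := hmix.posSemidef.posSemidef_sqrt
  have hσpd : σ.PosDef := PGMAux.sqrt_posDef hmix
  have hσσ : σ * σ = Φ := hmix.posSemidef.sqrt_mul_self
  have hσdet : IsUnit σ.det := hσpd.det_pos.ne'.isUnit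
  have hσR : σ * R = 1 := Matrix.mul_nonsing_inv σ hσdet
  have hRσ : R * σ = 1 := Matrix.nonsing_inv_mul σ hσdet
  have hRpd : R.PosDef := hσpd.inv
  set T : Matrix (Fin n) (Fin n) ℂ := hRpd.posSemidef.sqrt with hTdef
  have hTpd : T.PosDef := PGMAux.sqrt_posDef hRpd
  have hTT : T * T = R := hRpd.posSemidef.sqrt_mul_self
  have hTdet : IsUnit T.det := hTpd.det_pos.ne'.isUnit
  set U : Matrix (Fin n) (Fin n) ℂ := T⁻¹ with hUdef
  have hTU : T * U = 1 := Matrix.mul_nonsing_inv T hTdet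
  have hUT : U * T = 1 := Matrix.nonsing_inv_mul T hTdet
  have hUU : U * U = σ := by
    rw [hUdef, ← Matrix.mul_inv_rev, hTT, hRdef]
    exact Matrix.nonsing_inv_nonsing_inv σ hσdet
  have hΦH : Φᴴ = Φ := hmix.isHermitian.eq
  have hσH : σᴴ = σ := hσpsd.isHermitian.eq
  have hTH : Tᴴ = T := hTpd.isHermitian.eq
  have hUH : Uᴴ = U := by rw [hUdef, Matrix.conjTranspose_nonsing_inv, hTH]
  have hφH : ∀ x, (φ x)ᴴ = φ x := fun x => (hφ x).isHermitian.eq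
  have hRΦ : R * Φ = σ := by rw [← hσσ, ← Matrix.mul_assoc, hRσ, Matrix.one_mul]
  have hΦtr : Φ.trace = 1 := by
    rw [hΦdef, Matrix.trace_sum]
    simp only [Matrix.trace_smul, hφtr, smul_eq_mul, mul_one]
    rw [← Complex.ofReal_sum, hp1, Complex.ofReal_one]
  have hσσtr : (σ * σ).trace = 1 := by rw [hσσ, hΦtr]
  have hpφ : ∀ x, ((p x : ℂ) • φ x).PosSemidef := fun x =>
    PGMAux.smul_posSemidef (hφ x) (hp0 x)
  have hΦsub : ∀ x : X, (Φ - (p x : ℂ) • φ x).PosSemidef := by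
    intro x
    have he : Φ - (p x : ℂ) • φ x = ∑ y ∈ Finset.univ.erase x, (p y : ℂ) • φ y := by
      rw [sub_eq_iff_eq_add, hΦdef]
      exact (Finset.sum_erase_add _ _ (Finset.mem_univ x)).symm
    rw [he]
    exact PGMAux.sum_posSemidef _ _ fun y _ => hpφ y
  -- the set of POVM success probabilities
  set S : Set ℝ := {r : ℝ | ∃ Λ : X → Matrix (Fin n) (Fin n) ℂ,
      (∀ x, (Λ x).PosSemidef) ∧ (∑ x, Λ x = 1) ∧
        r = ∑ x, p x * ((φ x * Λ x).trace).re} with hSdef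
  -- pointwise domination by the average state
  have hdom : ∀ (Λ : X → Matrix (Fin n) (Fin n) ℂ), (∀ x, (Λ x).PosSemidef) →
      ∀ x, p x * ((φ x * Λ x).trace).re ≤ ((Φ * Λ x).trace).re := by
    intro Λ hΛ x
    have h0 := PGMAux.trace_mul_re_nonneg' (hΦsub x) (hΛ x)
    rw [Matrix.sub_mul, Matrix.trace_sub, Complex.sub_re, Matrix.smul_mul,
      Matrix.trace_smul, smul_eq_mul, PGMAux.re_ofReal_mul'] at h0
    linarith
  have hsumΦΛ : ∀ (Λ : X → Matrix (Fin n) (Fin n) ℂ), (∑ x, Λ x = 1) →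
      ∑ x, ((Φ * Λ x).trace).re = 1 := by
    intro Λ hΛsum
    rw [← Complex.re_sum, ← Matrix.trace_sum, ← Matrix.mul_sum, hΛsum, Matrix.mul_one, hΦtr]
    simp
  have hub : ∀ r ∈ S, r ≤ 1 := by
    rintro r ⟨Λ, hΛ, hΛsum, rfl⟩
    calc ∑ x, p x * ((φ x * Λ x).trace).re
        ≤ ∑ x, ((Φ * Λ x).trace).re := Finset.sum_le_sum fun x _ => hdom Λ hΛ x
      _ = 1 := hsumΦΛ Λ hΛsum
  have hbdd : BddAbove S := ⟨1, fun r hr => hub r hr⟩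
  have hmemS : ∀ x0 : X, p x0 ∈ S := by
    intro x0
    refine ⟨fun y => if y = x0 then 1 else 0, fun y => ?_, ?_, ?_⟩
    · by_cases h : y = x0 <;> simp [h, Matrix.PosSemidef.one, Matrix.PosSemidef.zero]
    · simp
    · rw [Finset.sum_eq_single x0]
      · simp [hφtr x0]
      · intro y _ hy
        simp [hy]
      · intro h
        exact absurd (Finset.mem_univ x0) h
  have hSne : S.Nonempty := ⟨_, hmemS (Classical.arbitrary X)⟩
  have hq_ub : Popt ≤ 1 := by rw [hPopt]; exact csSup_le hSne hub
  have hq_lb : 1 / (m : ℝ) ≤ Popt := by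
    obtain ⟨x0, -, hx0⟩ := Finset.exists_le_of_sum_le (Finset.univ_nonempty)
      (show ∑ _x : X, 1 / (m : ℝ) ≤ ∑ x, p x by
        rw [Finset.sum_const, Finset.card_univ, hm, hp1, nsmul_eq_mul]
        rw [mul_one_div, div_self hm0R.ne'])
    exact hx0.trans (hPopt ▸ le_csSup hbdd (hmemS x0))
  -- pretty good measurement success probability is at least 1/m
  have hPpg_lb : 1 ≤ (m : ℝ) * Ppg := by
    set Zm : X → Matrix (Fin n) (Fin n) ℂ := fun x => T * ((p x : ℂ) • φ x) * T with hZm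
    have hZH : ∀ x : X, (Zm x)ᴴ = Zm x := by
      intro x
      exact PGMAux.herm_conj hTH (by
        rw [Matrix.conjTranspose_smul, hφH x, Complex.star_def, Complex.conj_ofReal])
    have hZsum : ∑ x, Zm x = T * Φ * T := by
      rw [hΦdef, Matrix.mul_sum, Matrix.sum_mul]
    have htrZZ : ((T * Φ * T) * (T * Φ * T)).trace = 1 := by
      rw [PGMAux.tr_TT hTT, hRΦ, hσR, Matrix.one_mul, hΦtr]
    have hexpand : ∑ x, ∑ y, ((Zm x * Zm y).trace) = 1 := by
      have hmm : (∑ x, Zm x) * (∑ y, Zm y) = ∑ x, ∑ y, Zm x * Zm y := by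
        rw [Matrix.sum_mul]
        exact Finset.sum_congr rfl fun x _ => Matrix.mul_sum _ _ _
      rw [← htrZZ, ← hZsum, hmm, Matrix.trace_sum]
      exact Finset.sum_congr rfl fun x _ => (Matrix.trace_sum _ _).symm
    have hre : ∑ x, ∑ y, ((Zm x * Zm y).trace).re = 1 := by
      have := congrArg Complex.re hexpand
      simpa [Complex.re_sum] using this
    have hpair : ∀ x y : X, 2 * ((Zm x * Zm y).trace).re
        ≤ ((Zm x * Zm x).trace).re + ((Zm y * Zm y).trace).re := by
      intro x y
      have := PGMAux.amgm_herm (hZH x) (hZH y) one_pos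
      simpa using this
    have hdiag : ∀ x : X, ((Zm x * Zm x).trace).re
        = p x ^ 2 * ((R * φ x * R * φ x).trace).re := by
      intro x
      rw [hZm]
      simp only
      rw [PGMAux.tr_TT hTT]
      simp only [Matrix.mul_smul, Matrix.smul_mul, smul_smul, Matrix.trace_smul, smul_eq_mul]
      rw [show ((p x : ℂ)) * (p x : ℂ) = ((p x * p x : ℝ) : ℂ) from by push_cast; ring,
        PGMAux.re_ofReal_mul']
      ring
    have hfin : 2 * (1 : ℝ) ≤ (m : ℝ) * Ppg + (m : ℝ) * Ppg := by
      calc 2 * (1 : ℝ) = ∑ x, ∑ y, 2 * ((Zm x * Zm y).trace).re := by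
            rw [← hre, Finset.mul_sum]
            exact Finset.sum_congr rfl fun x _ => Finset.mul_sum _ _ _
        _ ≤ ∑ x, ∑ y : X, (((Zm x * Zm x).trace).re + ((Zm y * Zm y).trace).re) :=
            Finset.sum_le_sum fun x _ => Finset.sum_le_sum fun y _ => hpair x y
        _ = (m : ℝ) * Ppg + (m : ℝ) * Ppg := by
            have hS : ∑ x, p x ^ 2 * ((R * φ x * R * φ x).trace).re = Ppg := hPpg.symm
            calc ∑ x, ∑ y : X, (((Zm x * Zm x).trace).re + ((Zm y * Zm y).trace).re)
                = ∑ x : X, ((m : ℝ) * (p x ^ 2 * ((R * φ x * R * φ x).trace).re) + Ppg) := by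
                  refine Finset.sum_congr rfl fun x _ => ?_
                  simp only [hdiag]
                  rw [Finset.sum_add_distrib, Finset.sum_const, Finset.card_univ, hm,
                    nsmul_eq_mul, hS]
              _ = (m : ℝ) * Ppg + (m : ℝ) * Ppg := by
                  rw [Finset.sum_add_distrib, ← Finset.mul_sum, hS, Finset.sum_const,
                    Finset.card_univ, hm, nsmul_eq_mul]
    linarith
  -- the key inequality, for every POVM and all parameters t, l
  have hclaim : ∀ t l : ℝ, 0 < l → ∀ r ∈ S,
      2 * ((1 - t) * r + t) ≤ l * ((1 - t) ^ 2 * Ppg + 2 * t * (1 - t) + t ^ 2 * m) + l⁻¹ := by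
    intro t l hl r hr
    obtain ⟨Λ, hΛ, hΛsum, rfl⟩ := hr
    have hone : ∀ x : X, ((1 : Matrix (Fin n) (Fin n) ℂ) - Λ x).PosSemidef := by
      intro x
      have he : (1 : Matrix (Fin n) (Fin n) ℂ) - Λ x = ∑ y ∈ Finset.univ.erase x, Λ y := by
        rw [sub_eq_iff_eq_add, ← hΛsum]
        exact (Finset.sum_erase_add _ _ (Finset.mem_univ x)).symm
      rw [he]
      exact PGMAux.sum_posSemidef _ _ fun y _ => hΛ y
    set Bm : X → Matrix (Fin n) (Fin n) ℂ :=
      fun x => ((1 - t : ℝ) : ℂ) • ((p x : ℂ) • φ x) + ((t : ℝ) : ℂ) • Φ with hBm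
    have hBH : ∀ x, (Bm x)ᴴ = Bm x := by
      intro x
      simp only [hBm, Matrix.conjTranspose_add, Matrix.conjTranspose_smul, hφH x, hΦH,
        Complex.star_def, Complex.conj_ofReal]
    -- the cross trace
    have hXY : ∀ x, ((T * Bm x * T) * (U * Λ x * U)).trace = (Bm x * Λ x).trace := by
      intro x
      have e1 : (T * Bm x * T) * (U * Λ x * U) = (T * Bm x) * ((T * U) * (Λ x * U)) := by
        simp only [Matrix.mul_assoc]
      rw [e1, hTU, Matrix.one_mul, Matrix.trace_mul_comm]
      have e2 : (Λ x * U) * (T * Bm x) = Λ x * ((U * T) * Bm x) := by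
        simp only [Matrix.mul_assoc]
      rw [e2, hUT, Matrix.one_mul, Matrix.trace_mul_comm]
    have hBΛ : ∀ x, ((Bm x * Λ x).trace).re
        = (1 - t) * (p x * ((φ x * Λ x).trace).re) + t * ((Φ * Λ x).trace).re := by
      intro x
      have e : Bm x * Λ x = (((1 - t) * p x : ℝ) : ℂ) • (φ x * Λ x)
          + ((t : ℝ) : ℂ) • (Φ * Λ x) := by
        simp only [hBm, Matrix.add_mul, Matrix.smul_mul, smul_smul]
        rw [show ((1 - t : ℝ) : ℂ) * ((p x : ℝ) : ℂ) = (((1 - t) * p x : ℝ) : ℂ) from by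
          push_cast; ring]
      rw [e, Matrix.trace_add, Matrix.trace_smul, Matrix.trace_smul, Complex.add_re,
        smul_eq_mul, smul_eq_mul, PGMAux.re_ofReal_mul', PGMAux.re_ofReal_mul']
      ring
    have hXX : ∀ x, (((T * Bm x * T) * (T * Bm x * T)).trace).re
        = (1 - t) ^ 2 * (p x ^ 2 * ((R * φ x * R * φ x).trace).re)
          + 2 * t * (1 - t) * p x + t ^ 2 := by
      intro x
      rw [PGMAux.tr_TT hTT]
      have e0 : R * Bm x = (((1 - t) * p x : ℝ) : ℂ) • (R * φ x) + ((t : ℝ) : ℂ) • σ := by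
        simp only [hBm, Matrix.mul_add, Matrix.mul_smul, hRΦ, smul_smul]
        rw [show ((1 - t : ℝ) : ℂ) * ((p x : ℝ) : ℂ) = (((1 - t) * p x : ℝ) : ℂ) from by
          push_cast; ring]
      have e1 : R * Bm x * R * Bm x = (R * Bm x) * (R * Bm x) := by
        simp only [Matrix.mul_assoc]
      rw [e1, e0]
      have t2 : ((R * φ x) * σ).trace = 1 := by
        rw [Matrix.trace_mul_comm, ← Matrix.mul_assoc, hσR, Matrix.one_mul, hφtr]
      have t3 : (σ * (R * φ x)).trace = 1 := by
        rw [← Matrix.mul_assoc, hσR, Matrix.one_mul, hφtr]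
      have t1 : ((R * φ x) * (R * φ x)).trace = (R * φ x * R * φ x).trace := by
        simp only [Matrix.mul_assoc]
      simp only [Matrix.add_mul, Matrix.mul_add, Matrix.smul_mul, Matrix.mul_smul, smul_smul,
        Matrix.trace_add, Matrix.trace_smul, smul_eq_mul, t1, t2, t3, hσσtr]
      simp only [Complex.add_re, Complex.mul_re, Complex.ofReal_re, Complex.ofReal_im,
        Complex.one_re, Complex.one_im, mul_zero, zero_mul, sub_zero, mul_one]
      ring
    have hYY : ∀ x, (((U * Λ x * U) * (U * Λ x * U)).trace).re ≤ ((Φ * Λ x).trace).re := by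
      intro x
      rw [PGMAux.tr_TT hUU]
      have h6 := PGMAux.six hσpsd (hΛ x) (hone x)
      rwa [hσσ] at h6
    have hAM : ∀ x, 2 * (((T * Bm x * T) * (U * Λ x * U)).trace).re
        ≤ l * (((T * Bm x * T) * (T * Bm x * T)).trace).re
          + l⁻¹ * (((U * Λ x * U) * (U * Λ x * U)).trace).re := fun x =>
      PGMAux.amgm_herm (PGMAux.herm_conj hTH (hBH x))
        (PGMAux.herm_conj hUH (hΛ x).isHermitian.eq) hl
    have hL : ∑ x, 2 * (((T * Bm x * T) * (U * Λ x * U)).trace).re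
        = 2 * ((1 - t) * (∑ x, p x * ((φ x * Λ x).trace).re) + t) := by
      calc ∑ x, 2 * (((T * Bm x * T) * (U * Λ x * U)).trace).re
          = ∑ x, (2 * ((1 - t) * (p x * ((φ x * Λ x).trace).re))
              + 2 * (t * ((Φ * Λ x).trace).re)) := by
            refine Finset.sum_congr rfl fun x _ => ?_
            rw [hXY x, hBΛ x]; ring
        _ = 2 * ((1 - t) * (∑ x, p x * ((φ x * Λ x).trace).re) + t) := by
            rw [Finset.sum_add_distrib, ← Finset.mul_sum, ← Finset.mul_sum,
              ← Finset.mul_sum, ← Finset.mul_sum, hsumΦΛ Λ hΛsum]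
            ring
    have hRt : ∑ x, (l * (((T * Bm x * T) * (T * Bm x * T)).trace).re
          + l⁻¹ * (((U * Λ x * U) * (U * Λ x * U)).trace).re)
        ≤ l * ((1 - t) ^ 2 * Ppg + 2 * t * (1 - t) + t ^ 2 * m) + l⁻¹ := by
      have hXsum : ∑ x, (((T * Bm x * T) * (T * Bm x * T)).trace).re
          = (1 - t) ^ 2 * Ppg + 2 * t * (1 - t) + t ^ 2 * m := by
        calc ∑ x, (((T * Bm x * T) * (T * Bm x * T)).trace).re
            = ∑ x, ((1 - t) ^ 2 * (p x ^ 2 * ((R * φ x * R * φ x).trace).re)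
                + 2 * t * (1 - t) * p x + t ^ 2) := Finset.sum_congr rfl fun x _ => hXX x
          _ = (1 - t) ^ 2 * Ppg + 2 * t * (1 - t) + t ^ 2 * m := by
              rw [Finset.sum_add_distrib, Finset.sum_add_distrib, ← Finset.mul_sum,
                ← Finset.mul_sum, ← hPpg, hp1, Finset.sum_const, Finset.card_univ, hm,
                nsmul_eq_mul]
              ring
      have hYsum : ∑ x, (((U * Λ x * U) * (U * Λ x * U)).trace).re ≤ 1 := by
        calc ∑ x, (((U * Λ x * U) * (U * Λ x * U)).trace).re
            ≤ ∑ x, ((Φ * Λ x).trace).re := Finset.sum_le_sum fun x _ => hYY x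
          _ = 1 := hsumΦΛ Λ hΛsum
      rw [Finset.sum_add_distrib, ← Finset.mul_sum, ← Finset.mul_sum, hXsum]
      have : l⁻¹ * (∑ x, (((U * Λ x * U) * (U * Λ x * U)).trace).re) ≤ l⁻¹ * 1 :=
        mul_le_mul_of_nonneg_left hYsum (by positivity)
      linarith
    calc 2 * ((1 - t) * (∑ x, p x * ((φ x * Λ x).trace).re) + t)
        = ∑ x, 2 * (((T * Bm x * T) * (U * Λ x * U)).trace).re := hL.symm
      _ ≤ ∑ x, (l * (((T * Bm x * T) * (T * Bm x * T)).trace).re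
          + l⁻¹ * (((U * Λ x * U) * (U * Λ x * U)).trace).re) :=
            Finset.sum_le_sum fun x _ => hAM x
      _ ≤ l * ((1 - t) ^ 2 * Ppg + 2 * t * (1 - t) + t ^ 2 * m) + l⁻¹ := hRt
  have hstar : ∀ t l : ℝ, 0 < l → 0 < 1 - t →
      2 * ((1 - t) * Popt + t) ≤ l * ((1 - t) ^ 2 * Ppg + 2 * t * (1 - t) + t ^ 2 * m) + l⁻¹ := by
    intro t l hl ht
    have h1 : Popt ≤ (l * ((1 - t) ^ 2 * Ppg + 2 * t * (1 - t) + t ^ 2 * m) + l⁻¹ - 2 * t)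
        / (2 * (1 - t)) := by
      rw [hPopt]
      refine csSup_le hSne fun r hr => ?_
      have h2 := hclaim t l hl r hr
      rw [le_div_iff₀ (by positivity)]
      linarith
    rw [le_div_iff₀ (by positivity)] at h1
    linarith
  -- final algebra
  have hm1 : (0 : ℝ) < (m : ℝ) - 1 := by linarith
  rcases eq_or_lt_of_le hq_lb with heq | hlt
  · rw [← heq]
    have halg : (1 / (m : ℝ)) ^ 2 + (1 - 1 / (m : ℝ)) ^ 2 / ((m : ℝ) - 1) = 1 / (m : ℝ) := by
      field_simp
      ring
    rw [halg, ge_iff_le, div_le_iff₀ hm0R]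
    linarith [hPpg_lb]
  · have hmq : 0 < (m : ℝ) * Popt - 1 := by
      have := (div_lt_iff₀ hm0R).mp hlt
      nlinarith
    have hq0 : 0 < Popt := lt_of_le_of_lt (by positivity) hlt
    have hd1 : 0 < (m : ℝ) - 2 + Popt := by
      have : (2 : ℝ) ≤ (m : ℝ) := by exact_mod_cast hm2
      linarith
    set t : ℝ := -(1 - Popt) / ((m : ℝ) - 2 + Popt) with htdef
    set l : ℝ := ((m : ℝ) - 2 + Popt) / ((m : ℝ) * Popt - 1) with hldef
    have hl : 0 < l := div_pos hd1 hmq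
    have h1t : 0 < 1 - t := by
      have he : 1 - t = ((m : ℝ) - 1) / ((m : ℝ) - 2 + Popt) := by
        rw [htdef]; field_simp; ring
      rw [he]
      positivity
    have key := hstar t l hl h1t
    have hcoef : 0 < l * (1 - t) ^ 2 := mul_pos hl (pow_pos h1t 2)
    have hrepr : Popt ^ 2 + (1 - Popt) ^ 2 / ((m : ℝ) - 1)
        = (2 * ((1 - t) * Popt + t) - l⁻¹ - l * (2 * t * (1 - t) + t ^ 2 * m))
          / (l * (1 - t) ^ 2) := by
      rw [eq_div_iff hcoef.ne', htdef, hldef]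
      field_simp [hd1.ne', hmq.ne', hm1.ne', (show Popt * (m : ℝ) - 1 ≠ 0 by linarith)]
      ring
    rw [ge_iff_le, hrepr, div_le_iff₀ hcoef]
    ring_nf
    ring_nf at key
    linarith
end
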